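/- arXiv:2405.01014 — 4 statements merged into one kernel-verified Lean document; each statement's English description precedes it below -/
import Mathlib

section
/- There exists an absolute constant C > 0 such that the following holds for all integers n ≥ 2, all N ∈ [1..n] with N dividing n, all p₁ ∈ (0,1], and every mutation operator mut satisfying that for every x ∈ {0,1}^n and every y ∈ {0,1}^n at Hamming distance 1 from x, Pr[mut(x) = y] ≥ p₁/n: the expected number of function evaluations of the MOEA/D with mutation operator mut, decomposition number N, and equidistant Chebyshev parametrization maximizing OneMinMax until its reference point satisfies z* = (n, n) is at most C·(n/p₁)·N·ln n. -/
open scoped ENNReal Classical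
open MeasureTheory

noncomputable section

/-- Bit strings of length `n`. -/
abbrev BitString (n : ℕ) : Type := Fin n → Bool

/-- The number of ones of a bit string. -/
def ones {n : ℕ} (x : BitString n) : ℕ := (Finset.univ.filter (fun i => x i = true)).card

/-- The number of zeros of a bit string. -/
def zeros {n : ℕ} (x : BitString n) : ℕ := (Finset.univ.filter (fun i => x i = false)).card

/-- Hamming distance. -/
def hamming {n : ℕ} (x y : BitString n) : ℕ := (Finset.univ.filter (fun i => x i ≠ y i)).card

/-- `mutOp` is standard bit mutation: each of the `n` bits of the parent is flipped
independently with probability `1/n`. -/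
def IsStandardBitMutation (n : ℕ) (mutOp : BitString n → PMF (BitString n)) : Prop :=
  ∀ x y : BitString n,
    mutOp x y = ENNReal.ofReal ((1 / n : ℝ) ^ hamming x y * (1 - 1 / n : ℝ) ^ (n - hamming x y))

/-- The normalization constant `C_β = ∑_{i=1}^n i^{-β}` of the power-law distribution. -/
def powC (β : ℝ) (n : ℕ) : ℝ := ∑ i ∈ Finset.Icc 1 n, (i : ℝ) ^ (-β)

/-- `mutOp` is power-law mutation with exponent `β`: a mutation strength `X ∈ [1..n]` is
sampled with `Pr[X = i] = i^{-β}/C_β`, and then a uniformly random subset of positions of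
size `X` is flipped.  Hence a string at Hamming distance `d ≥ 1` from the parent is produced
with probability `(d^{-β}/C_β) / C(n,d)`, and the parent itself with probability `0`. -/
def IsPowerLawMutation (n : ℕ) (β : ℝ) (mutOp : BitString n → PMF (BitString n)) : Prop :=
  ∀ x y : BitString n,
    mutOp x y =
      if hamming x y = 0 then 0
      else ENNReal.ofReal
        ((hamming x y : ℝ) ^ (-β) / powC β n / (n.choose (hamming x y) : ℝ))

/-- `v` weakly dominates `u` (componentwise `≥`, maximization). -/
def weakDom (v u : ℝ × ℝ) : Prop := u.1 ≤ v.1 ∧ u.2 ≤ v.2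

/-- The OneMinMax benchmark: `x ↦ (|x|₀, |x|₁)`. -/
def OMM (n : ℕ) (x : BitString n) : ℝ × ℝ := ((zeros x : ℝ), (ones x : ℝ))

/-- The state of the MOEA/D: population, reference point, archive. -/
structure MState (n N : ℕ) where
  pop : Fin (N + 1) → BitString n
  ref : ℝ × ℝ
  arch : Set (ℝ × ℝ)

/-- The Chebyshev subproblem `g_i` with equidistant weights `w_i = i/N`. -/
def gSub (n N : ℕ) (f : BitString n → ℝ × ℝ) (i : Fin (N + 1)) (x : BitString n)
    (z : ℝ × ℝ) : ℝ :=
  max (((i : ℕ) : ℝ) / N * |z.1 - (f x).1|) ((1 - ((i : ℕ) : ℝ) / N) * |z.2 - (f x).2|)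

/-- Archive update: remove all elements weakly dominated by `v`, then add `v` if it is not
weakly dominated by a remaining element. -/
def archUpdate (arch : Set (ℝ × ℝ)) (v : ℝ × ℝ) : Set (ℝ × ℝ) :=
  let A := {u ∈ arch | ¬ weakDom v u}
  if ∃ u ∈ A, weakDom u v then A else insert v A

/-- One inner step of the MOEA/D, treating subproblem `i`: mutate `x_i`, update the
reference point, conditionally replace `x_i`, and update the archive. -/
def subStep (n N : ℕ) (f : BitString n → ℝ × ℝ) (mutOp : BitString n → PMF (BitString n))
    (i : Fin (N + 1)) (s : MState n N) : PMF (MState n N) :=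
  (mutOp (s.pop i)).bind fun y =>
    PMF.pure
      (let z' : ℝ × ℝ := (max s.ref.1 (f y).1, max s.ref.2 (f y).2)
       { pop :=
           if gSub n N f i y z' ≤ gSub n N f i (s.pop i) z' then Function.update s.pop i y
           else s.pop
         ref := z'
         arch := archUpdate s.arch (f y) })

/-- One iteration of the MOEA/D: treat the subproblems `i = 0, …, N` in order. -/
def iterStep (n N : ℕ) (f : BitString n → ℝ × ℝ) (mutOp : BitString n → PMF (BitString n))
    (s : MState n N) : PMF (MState n N) :=
  (List.finRange (N + 1)).foldl (fun p i => p.bind (subStep n N f mutOp i)) (PMF.pure s)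

/-- The initial state built from a sampled population: the reference point is the
componentwise maximum of the objective values, and the archive is the set of
non-dominated objective values of the population. -/
def initState (n N : ℕ) (f : BitString n → ℝ × ℝ) (pop : Fin (N + 1) → BitString n) :
    MState n N where
  pop := pop
  ref := (⨆ i, (f (pop i)).1, ⨆ i, (f (pop i)).2)
  arch := {v | (∃ i, f (pop i) = v) ∧ ∀ j, ¬ (weakDom (f (pop j)) v ∧ f (pop j) ≠ v)}

/-- The distribution of the initial state: the population is sampled uniformly at random. -/
def initPMF (n N : ℕ) (f : BitString n → ℝ × ℝ) : PMF (MState n N) :=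
  (PMF.uniformOfFintype (Fin (N + 1) → BitString n)).map (initState n N f)

/-- Joint law of `(current state, list of all states so far)` after `t` iterations. -/
def histPMF {S : Type*} (init : PMF S) (step : S → PMF S) : ℕ → PMF (S × List S)
  | 0 => init.map fun s => (s, [s])
  | t + 1 => (histPMF init step t).bind fun p => (step p.1).map fun s' => (s', s' :: p.2)

/-- `Pr[T > t]`: the probability that none of the states after `0, 1, …, t` iterations
satisfies `done`, where `T` is the first iteration after which `done` holds. -/
def survivalProb {S : Type*} (init : PMF S) (step : S → PMF S) (done : S → Prop) (t : ℕ) :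
    ℝ≥0∞ :=
  (histPMF init step t).toOuterMeasure {p | ∀ s ∈ p.2, ¬ done s}

/-- The expected number of function evaluations of the MOEA/D on `f` until `done` first
holds: `N + 1` evaluations at initialization and `N + 1` per iteration, i.e.
`(N+1) · (1 + E[T]) = (N+1) · (1 + ∑_t Pr[T > t])`. -/
def expectedEvals (n N : ℕ) (f : BitString n → ℝ × ℝ) (mutOp : BitString n → PMF (BitString n))
    (done : MState n N → Prop) : ℝ≥0∞ :=
  ((N : ℝ≥0∞) + 1) * (1 + ∑' t, survivalProb (initPMF n N f) (iterStep n N f mutOp) done t)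

/-- The Pareto front of OneMinMax: `{(i, n-i) : 0 ≤ i ≤ n}`. -/
def paretoFrontOMM (n : ℕ) : Set (ℝ × ℝ) :=
  {v | ∃ i : ℕ, i ≤ n ∧ v = ((i : ℝ), (n : ℝ) - (i : ℝ))}

namespace MoeadAux


variable {S T ι : Type*}

/-- Expectation of `g` under PMF `p`. -/
def Ed (p : PMF S) (g : S → ℝ≥0∞) : ℝ≥0∞ := ∑' s, p s * g s

lemma Ed_pure (s : S) (g : S → ℝ≥0∞) : Ed (PMF.pure s) g = g s := by
  rw [Ed, tsum_eq_single s (fun b hb => by simp [PMF.pure_apply, hb])]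
  simp [PMF.pure_apply]

lemma Ed_bind (p : PMF S) (f : S → PMF T) (g : T → ℝ≥0∞) :
    Ed (p.bind f) g = ∑' s, p s * Ed (f s) g := by
  simp only [Ed, PMF.bind_apply]
  have h1 : ∀ t, (∑' s, p s * (f s) t) * g t = ∑' s, p s * ((f s) t * g t) := by
    intro t
    rw [← ENNReal.tsum_mul_right]
    congr 1; ext s; ring
  simp only [h1]
  rw [ENNReal.tsum_comm]
  congr 1; ext s
  rw [ENNReal.tsum_mul_left]

lemma Ed_mono {p : PMF S} {g h : S → ℝ≥0∞} (hg : ∀ s ∈ p.support, g s ≤ h s) :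
    Ed p g ≤ Ed p h := by
  refine ENNReal.tsum_le_tsum fun s => ?_
  by_cases hs : s ∈ p.support
  · exact mul_le_mul_right (hg s hs) _
  · have : p s = 0 := by simpa [PMF.mem_support_iff] using hs
    simp [this]

lemma Ed_le_const {p : PMF S} {g : S → ℝ≥0∞} {c : ℝ≥0∞} (hg : ∀ s ∈ p.support, g s ≤ c) :
    Ed p g ≤ c := by
  calc Ed p g ≤ Ed p (fun _ => c) := Ed_mono hg
    _ = (∑' s, p s) * c := by rw [Ed, ENNReal.tsum_mul_right]
    _ = c := by rw [PMF.tsum_coe, one_mul]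

lemma Ed_add (p : PMF S) (g h : S → ℝ≥0∞) :
    Ed p (fun s => g s + h s) = Ed p g + Ed p h := by
  rw [Ed, Ed, Ed, ← ENNReal.tsum_add]
  congr 1; ext s; ring

lemma prob_le_Ed {p : PMF S} {E : Set S} {g : S → ℝ≥0∞}
    (h : ∀ s ∈ p.support, s ∈ E → 1 ≤ g s) :
    p.toOuterMeasure E ≤ Ed p g := by
  rw [PMF.toOuterMeasure_apply]
  refine ENNReal.tsum_le_tsum fun s => ?_
  by_cases hs : s ∈ p.support
  · by_cases hE : s ∈ E
    · rw [Set.indicator_of_mem hE]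
      calc p s = p s * 1 := (mul_one _).symm
        _ ≤ p s * g s := mul_le_mul_right (h s hs hE) _
    · simp [Set.indicator_of_notMem hE]
  · have : p s = 0 := by simpa [PMF.mem_support_iff] using hs
    by_cases hE : s ∈ E
    · simp [Set.indicator_of_mem hE, this]
    · simp [Set.indicator_of_notMem hE]

lemma prob_le_one (p : PMF S) (E : Set S) : p.toOuterMeasure E ≤ 1 := by
  rw [PMF.toOuterMeasure_apply, ← PMF.tsum_coe p]
  refine ENNReal.tsum_le_tsum fun s => ?_
  by_cases hE : s ∈ E
  · simp [Set.indicator_of_mem hE]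
  · simp [Set.indicator_of_notMem hE]

/-- Sequential composition of kernels along a list. -/
def runL (k : ι → S → PMF S) : List ι → S → PMF S
  | [], s => PMF.pure s
  | i :: L, s => (k i s).bind (runL k L)

lemma foldl_bind (k : ι → S → PMF S) (L : List ι) (p : PMF S) :
    L.foldl (fun q i => q.bind (k i)) p = p.bind (runL k L) := by
  induction L generalizing p with
  | nil => simp [runL]
  | cons i L ih => simp only [List.foldl_cons, ih, runL, PMF.bind_bind]

lemma runL_support {k : ι → S → PMF S} {Inv : S → Prop}
    (hk : ∀ i s, Inv s → ∀ s' ∈ (k i s).support, Inv s') :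
    ∀ L (s : S), Inv s → ∀ s' ∈ (runL k L s).support, Inv s' := by
  intro L
  induction L with
  | nil => intro s hs s' hs'; simp [runL, PMF.support_pure] at hs'; rwa [hs']
  | cons i L ih =>
      intro s hs s' hs'
      rw [runL, PMF.mem_support_bind_iff] at hs'
      obtain ⟨a, ha, ha'⟩ := hs'
      exact ih a (hk i s hs a ha) s' ha'

lemma runL_Ed {k : ι → S → PMF S} {Inv : S → Prop} {g : S → ℝ≥0∞} {κ : ι → ℝ≥0∞}
    (hk : ∀ i s, Inv s → ∀ s' ∈ (k i s).support, Inv s')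
    (hd : ∀ i s, Inv s → Ed (k i s) g ≤ κ i * g s) :
    ∀ L (s : S), Inv s → Ed (runL k L s) g ≤ (L.map κ).prod * g s := by
  intro L
  induction L with
  | nil => intro s hs; simp [runL, Ed_pure]
  | cons i L ih =>
      intro s hs
      rw [runL, Ed_bind]
      calc ∑' s', (k i s) s' * Ed (runL k L s') g
          ≤ ∑' s', (k i s) s' * ((L.map κ).prod * g s') := by
            refine ENNReal.tsum_le_tsum fun s' => ?_
            by_cases hs' : s' ∈ (k i s).support
            · exact mul_le_mul_right (ih s' (hk i s hs s' hs')) _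
            · have : (k i s) s' = 0 := by simpa [PMF.mem_support_iff] using hs'
              simp [this]
        _ = (L.map κ).prod * Ed (k i s) g := by
            rw [Ed, ← ENNReal.tsum_mul_left]
            congr 1; ext s'; ring
        _ ≤ (L.map κ).prod * (κ i * g s) := mul_le_mul_right (hd i s hs) _
        _ = ((i :: L).map κ).prod * g s := by
            simp only [List.map_cons, List.prod_cons]; ring

lemma tsum_split (f : ℕ → ℝ≥0∞) (k : ℕ) :
    ∑' t, f t = ∑ i ∈ Finset.range k, f i + ∑' t, f (t + k) := by
  induction k with
  | zero => simp
  | succ k ih =>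
      rw [ih, Finset.sum_range_succ,
        tsum_eq_zero_add' (f := fun t => f (t + k)) ENNReal.summable]
      have : ∀ t : ℕ, f (t + 1 + k) = f (t + (k + 1)) := fun t => by ring_nf
      simp only [this, zero_add]
      ring

end MoeadAux

namespace MoeadAux

variable {n N : ℕ}

lemma zeros_le (x : BitString n) : zeros x ≤ n := by
  simpa [zeros] using (Finset.card_filter_le Finset.univ (fun i => x i = false))

lemma ones_le (x : BitString n) : ones x ≤ n := by
  simpa [ones] using (Finset.card_filter_le Finset.univ (fun i => x i = true))

lemma zeros_add_ones (x : BitString n) : zeros x + ones x = n := by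
  have h := Finset.card_filter_add_card_filter_not
      (s := (Finset.univ : Finset (Fin n))) (p := fun i => x i = false)
  simp only [Finset.card_univ, Fintype.card_fin] at h
  have h2 : (Finset.univ.filter fun i => ¬ x i = false)
      = Finset.univ.filter fun i => x i = true := by
    ext i; simp
  rw [zeros, ones, ← h2]
  exact h

lemma zeros_update_true {x : BitString n} {j : Fin n} (hj : x j = true) :
    zeros (Function.update x j false) = zeros x + 1 := by
  have hset : (Finset.univ.filter fun i => Function.update x j false i = false)
      = insert j (Finset.univ.filter fun i => x i = false) := by
    ext i
    by_cases h : i = j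
    · subst h; simp
    · simp [Function.update_of_ne h, h]
  rw [zeros, hset, Finset.card_insert_of_notMem (by simp [hj]), zeros]

lemma ones_update_false {x : BitString n} {j : Fin n} (hj : x j = false) :
    ones (Function.update x j true) = ones x + 1 := by
  have hset : (Finset.univ.filter fun i => Function.update x j true i = true)
      = insert j (Finset.univ.filter fun i => x i = true) := by
    ext i
    by_cases h : i = j
    · subst h; simp
    · simp [Function.update_of_ne h, h]
  rw [ones, hset, Finset.card_insert_of_notMem (by simp [hj]), ones]

lemma hamming_update {x : BitString n} {j : Fin n} {b : Bool} (h : x j ≠ b) :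
    hamming x (Function.update x j b) = 1 := by
  rw [hamming, show (Finset.univ.filter fun i => x i ≠ Function.update x j b i) = {j} from ?_]
  · exact Finset.card_singleton j
  · ext i
    by_cases hi : i = j
    · subst hi; simp [h]
    · simp [Function.update_of_ne hi, hi]

/-- Reference point update. -/
def zUp (f : BitString n → ℝ × ℝ) (z : ℝ × ℝ) (y : BitString n) : ℝ × ℝ :=
  (max z.1 (f y).1, max z.2 (f y).2)

/-- The state after one inner step with offspring `y`. -/
def stateAfter (n N : ℕ) (f : BitString n → ℝ × ℝ) (i : Fin (N + 1)) (s : MState n N)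
    (y : BitString n) : MState n N where
  pop := if gSub n N f i y (zUp f s.ref y) ≤ gSub n N f i (s.pop i) (zUp f s.ref y) then
      Function.update s.pop i y else s.pop
  ref := zUp f s.ref y
  arch := archUpdate s.arch (f y)

lemma subStep_eq (f : BitString n → ℝ × ℝ) (mutOp : BitString n → PMF (BitString n))
    (i : Fin (N + 1)) (s : MState n N) :
    subStep n N f mutOp i s
      = (mutOp (s.pop i)).bind fun y => PMF.pure (stateAfter n N f i s y) := rfl

lemma stateAfter_pop (f : BitString n → ℝ × ℝ) (i : Fin (N + 1)) (s : MState n N)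
    (y : BitString n) :
    (stateAfter n N f i s y).pop
      = if gSub n N f i y (zUp f s.ref y) ≤ gSub n N f i (s.pop i) (zUp f s.ref y) then
          Function.update s.pop i y else s.pop := rfl

lemma stateAfter_ref (f : BitString n → ℝ × ℝ) (i : Fin (N + 1)) (s : MState n N)
    (y : BitString n) : (stateAfter n N f i s y).ref = zUp f s.ref y := rfl

lemma stateAfter_pop_mem (f : BitString n → ℝ × ℝ) (i : Fin (N + 1)) (s : MState n N)
    (y : BitString n) (j : Fin (N + 1)) :
    (stateAfter n N f i s y).pop j = s.pop j ∨ (stateAfter n N f i s y).pop j = y := by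
  rw [stateAfter_pop]
  split
  · by_cases hj : j = i
    · subst hj; right; exact Function.update_self _ _ _
    · left; exact Function.update_of_ne hj _ _
  · left; rfl

lemma Ed_subStep (f : BitString n → ℝ × ℝ) (mutOp : BitString n → PMF (BitString n))
    (i : Fin (N + 1)) (s : MState n N) (g : MState n N → ℝ≥0∞) :
    Ed (subStep n N f mutOp i s) g
      = ∑' y, mutOp (s.pop i) y * g (stateAfter n N f i s y) := by
  rw [subStep_eq, Ed_bind]
  congr 1; ext y; rw [Ed_pure]

/-- Potential of the subproblem-`N` individual. -/
def Apo (n N : ℕ) (s : MState n N) : ℕ := n - zeros (s.pop (Fin.last N))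

/-- Potential of the subproblem-`0` individual. -/
def Bpo (n N : ℕ) (s : MState n N) : ℕ := n - ones (s.pop 0)

/-- Invariant maintained by the process. -/
def Inv (n N : ℕ) (s : MState n N) : Prop :=
  ((zeros (s.pop (Fin.last N)) : ℝ) ≤ s.ref.1 ∧ s.ref.1 ≤ n) ∧
  ((ones (s.pop 0) : ℝ) ≤ s.ref.2 ∧ s.ref.2 ≤ n)

lemma gSub_last (hN : 1 ≤ N) (x : BitString n) (z : ℝ × ℝ) :
    gSub n N (OMM n) (Fin.last N) x z = |z.1 - (zeros x : ℝ)| := by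
  have hN0 : (N : ℝ) ≠ 0 := Nat.cast_ne_zero.2 (by omega)
  rw [gSub]
  simp only [OMM, Fin.val_last]
  rw [div_self hN0, one_mul, sub_self, zero_mul]
  exact max_eq_left (abs_nonneg _)

lemma gSub_zero (x : BitString n) (z : ℝ × ℝ) :
    gSub n N (OMM n) 0 x z = |z.2 - (ones x : ℝ)| := by
  rw [gSub]
  simp only [OMM, Fin.val_zero]
  rw [Nat.cast_zero, zero_div, zero_mul, sub_zero, one_mul]
  exact max_eq_right (abs_nonneg _)

lemma Inv_stateAfter (i : Fin (N + 1)) (s : MState n N) (y : BitString n)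
    (h : Inv n N s) : Inv n N (stateAfter n N (OMM n) i s y) := by
  constructor
  · constructor
    · rcases stateAfter_pop_mem (OMM n) i s y (Fin.last N) with hp | hp <;>
        rw [stateAfter_ref, zUp, hp]
      · exact le_trans h.1.1 (le_max_left _ _)
      · exact le_trans (le_of_eq (by simp [OMM])) (le_max_right _ _)
    · rw [stateAfter_ref, zUp]
      refine max_le h.1.2 ?_
      simp only [OMM]
      exact_mod_cast zeros_le y
  · constructor
    · rcases stateAfter_pop_mem (OMM n) i s y 0 with hp | hp <;>
        rw [stateAfter_ref, zUp, hp]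
      · exact le_trans h.2.1 (le_max_left _ _)
      · exact le_trans (le_of_eq (by simp [OMM])) (le_max_right _ _)
    · rw [stateAfter_ref, zUp]
      refine max_le h.2.2 ?_
      simp only [OMM]
      exact_mod_cast ones_le y

lemma zeros_last_mono (hN : 1 ≤ N) (i : Fin (N + 1)) (s : MState n N) (y : BitString n)
    (hInv : Inv n N s) :
    zeros (s.pop (Fin.last N))
      ≤ zeros ((stateAfter n N (OMM n) i s y).pop (Fin.last N)) := by
  by_cases hi : i = Fin.last N
  · subst hi
    rw [stateAfter_pop]
    split
    next hcond =>
      rw [Function.update_self]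
      rw [gSub_last hN, gSub_last hN] at hcond
      have h1 : (zeros y : ℝ) ≤ (zUp (OMM n) s.ref y).1 := by
        simp only [zUp, OMM]; exact le_max_right _ _
      have h2 : (zeros (s.pop (Fin.last N)) : ℝ) ≤ (zUp (OMM n) s.ref y).1 :=
        le_trans hInv.1.1 (le_max_left _ _)
      rw [abs_of_nonneg (by linarith), abs_of_nonneg (by linarith)] at hcond
      exact_mod_cast (by linarith : (zeros (s.pop (Fin.last N)) : ℝ) ≤ (zeros y : ℝ))
    next _ => exact le_refl _
  · rw [stateAfter_pop]
    have hne : Fin.last N ≠ i := fun h => hi h.symm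
    split
    · rw [Function.update_of_ne hne]
    · exact le_refl _

lemma ones_zero_mono (i : Fin (N + 1)) (s : MState n N) (y : BitString n)
    (hInv : Inv n N s) :
    ones (s.pop 0) ≤ ones ((stateAfter n N (OMM n) i s y).pop 0) := by
  by_cases hi : i = 0
  · subst hi
    rw [stateAfter_pop]
    split
    next hcond =>
      rw [Function.update_self]
      rw [gSub_zero, gSub_zero] at hcond
      have h1 : (ones y : ℝ) ≤ (zUp (OMM n) s.ref y).2 := by
        simp only [zUp, OMM]; exact le_max_right _ _
      have h2 : (ones (s.pop 0) : ℝ) ≤ (zUp (OMM n) s.ref y).2 :=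
        le_trans hInv.2.1 (le_max_left _ _)
      rw [abs_of_nonneg (by linarith), abs_of_nonneg (by linarith)] at hcond
      exact_mod_cast (by linarith : (ones (s.pop 0) : ℝ) ≤ (ones y : ℝ))
    next _ => exact le_refl _
  · rw [stateAfter_pop]
    have hne : (0 : Fin (N + 1)) ≠ i := fun h => hi h.symm
    split
    · rw [Function.update_of_ne hne]
    · exact le_refl _

lemma accept_last (hN : 1 ≤ N) (s : MState n N) (y : BitString n) (hInv : Inv n N s)
    (hzy : zeros (s.pop (Fin.last N)) ≤ zeros y) :
    (stateAfter n N (OMM n) (Fin.last N) s y).pop (Fin.last N) = y := by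
  rw [stateAfter_pop]
  have h1 : (zeros y : ℝ) ≤ (zUp (OMM n) s.ref y).1 := by
    simp only [zUp, OMM]; exact le_max_right _ _
  have h2 : (zeros (s.pop (Fin.last N)) : ℝ) ≤ (zUp (OMM n) s.ref y).1 :=
    le_trans hInv.1.1 (le_max_left _ _)
  have hzy' : (zeros (s.pop (Fin.last N)) : ℝ) ≤ (zeros y : ℝ) := by exact_mod_cast hzy
  rw [if_pos]
  · exact Function.update_self _ _ _
  · rw [gSub_last hN, gSub_last hN,
      abs_of_nonneg (by linarith), abs_of_nonneg (by linarith)]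
    linarith

lemma accept_zero (s : MState n N) (y : BitString n) (hInv : Inv n N s)
    (hzy : ones (s.pop 0) ≤ ones y) :
    (stateAfter n N (OMM n) 0 s y).pop 0 = y := by
  rw [stateAfter_pop]
  have h1 : (ones y : ℝ) ≤ (zUp (OMM n) s.ref y).2 := by
    simp only [zUp, OMM]; exact le_max_right _ _
  have h2 : (ones (s.pop 0) : ℝ) ≤ (zUp (OMM n) s.ref y).2 :=
    le_trans hInv.2.1 (le_max_left _ _)
  have hzy' : (ones (s.pop 0) : ℝ) ≤ (ones y : ℝ) := by exact_mod_cast hzy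
  rw [if_pos]
  · exact Function.update_self _ _ _
  · rw [gSub_zero, gSub_zero,
      abs_of_nonneg (by linarith), abs_of_nonneg (by linarith)]
    linarith


section Drift

variable {p₁ : ℝ} {mutOp : BitString n → PMF (BitString n)}

lemma Apo_mono (hN : 1 ≤ N) (i : Fin (N + 1)) (s : MState n N) (y : BitString n)
    (hInv : Inv n N s) :
    Apo n N (stateAfter n N (OMM n) i s y) ≤ Apo n N s :=
  Nat.sub_le_sub_left (zeros_last_mono hN i s y hInv) n

lemma Bpo_mono (i : Fin (N + 1)) (s : MState n N) (y : BitString n)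
    (hInv : Inv n N s) :
    Bpo n N (stateAfter n N (OMM n) i s y) ≤ Bpo n N s :=
  Nat.sub_le_sub_left (ones_zero_mono i s y hInv) n

lemma Ed_A_any (hN : 1 ≤ N) (i : Fin (N + 1)) (s : MState n N) (hInv : Inv n N s) :
    Ed (subStep n N (OMM n) mutOp i s) (fun s' => (Apo n N s' : ℝ≥0∞))
      ≤ (Apo n N s : ℝ≥0∞) := by
  rw [Ed_subStep]
  calc ∑' y, mutOp (s.pop i) y * (Apo n N (stateAfter n N (OMM n) i s y) : ℝ≥0∞)
      ≤ ∑' y, mutOp (s.pop i) y * (Apo n N s : ℝ≥0∞) := by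
        refine ENNReal.tsum_le_tsum fun y => mul_le_mul_right ?_ _
        exact_mod_cast Apo_mono hN i s y hInv
    _ = (Apo n N s : ℝ≥0∞) := by rw [ENNReal.tsum_mul_right, PMF.tsum_coe, one_mul]

lemma Ed_B_any (i : Fin (N + 1)) (s : MState n N) (hInv : Inv n N s) :
    Ed (subStep n N (OMM n) mutOp i s) (fun s' => (Bpo n N s' : ℝ≥0∞))
      ≤ (Bpo n N s : ℝ≥0∞) := by
  rw [Ed_subStep]
  calc ∑' y, mutOp (s.pop i) y * (Bpo n N (stateAfter n N (OMM n) i s y) : ℝ≥0∞)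
      ≤ ∑' y, mutOp (s.pop i) y * (Bpo n N s : ℝ≥0∞) := by
        refine ENNReal.tsum_le_tsum fun y => mul_le_mul_right ?_ _
        exact_mod_cast Bpo_mono i s y hInv
    _ = (Bpo n N s : ℝ≥0∞) := by rw [ENNReal.tsum_mul_right, PMF.tsum_coe, one_mul]

lemma Ed_A_last (hN : 1 ≤ N)
    (hmut : ∀ x y : BitString n, hamming x y = 1 → ENNReal.ofReal (p₁ / n) ≤ mutOp x y)
    (s : MState n N) (hInv : Inv n N s) :
    Ed (subStep n N (OMM n) mutOp (Fin.last N) s) (fun s' => (Apo n N s' : ℝ≥0∞))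
      ≤ (1 - ENNReal.ofReal (p₁ / n)) * (Apo n N s : ℝ≥0∞) := by
  set c := ENNReal.ofReal (p₁ / n) with hc
  set x := s.pop (Fin.last N) with hx
  set T : Finset (BitString n) :=
    (Finset.univ.filter fun j => x j = true).image (fun j => Function.update x j false) with hT
  have hmemT : ∀ y ∈ T, zeros y = zeros x + 1 ∧ hamming x y = 1 := by
    intro y hy
    rw [hT, Finset.mem_image] at hy
    obtain ⟨j, hj, rfl⟩ := hy
    rw [Finset.mem_filter] at hj
    exact ⟨zeros_update_true hj.2, hamming_update (by simp [hj.2])⟩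
  have hcard : T.card = Apo n N s := by
    rw [hT, Finset.card_image_of_injOn]
    · have h1 : (Finset.univ.filter fun j => x j = true).card = ones x := rfl
      have h2 := zeros_add_ones x
      have h3 : Apo n N s = n - zeros x := by rw [Apo, ← hx]
      rw [h1, h3]
      omega
    · intro j hj j' hj' hjj
      by_contra hne
      rw [Finset.mem_coe, Finset.mem_filter] at hj hj'
      have h5 := congrFun hjj j
      dsimp only at h5
      rw [Function.update_self, Function.update_of_ne hne, hj.2] at h5
      exact Bool.noConfusion h5
  have hApos : ∀ y ∈ T,
      (Apo n N (stateAfter n N (OMM n) (Fin.last N) s y) : ℝ≥0∞) + 1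
        ≤ (Apo n N s : ℝ≥0∞) := by
    intro y hy
    obtain ⟨hzy, _⟩ := hmemT y hy
    have hacc := accept_last hN s y hInv (by rw [← hx]; omega)
    have hyn : zeros y ≤ n := zeros_le y
    have : Apo n N (stateAfter n N (OMM n) (Fin.last N) s y) = n - (zeros x + 1) := by
      rw [Apo, hacc, hzy]
    rw [this]
    have h4 : Apo n N s = n - zeros x := by rw [Apo, ← hx]
    have hord : n - (zeros x + 1) + 1 ≤ Apo n N s := by rw [h4]; omega
    exact_mod_cast hord
  have key : Ed (subStep n N (OMM n) mutOp (Fin.last N) s)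
      (fun s' => (Apo n N s' : ℝ≥0∞)) + ∑ y ∈ T, mutOp x y ≤ (Apo n N s : ℝ≥0∞) := by
    rw [Ed_subStep, sum_eq_tsum_indicator, ← ENNReal.tsum_add]
    calc ∑' y, (mutOp x y * (Apo n N (stateAfter n N (OMM n) (Fin.last N) s y) : ℝ≥0∞)
          + Set.indicator (↑T) (⇑(mutOp x)) y)
        ≤ ∑' y, mutOp x y * (Apo n N s : ℝ≥0∞) := by
          refine ENNReal.tsum_le_tsum fun y => ?_
          by_cases hy : y ∈ T
          · rw [Set.indicator_of_mem (Finset.mem_coe.2 hy)]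
            calc mutOp x y * (Apo n N (stateAfter n N (OMM n) (Fin.last N) s y) : ℝ≥0∞)
                  + mutOp x y
                = mutOp x y * ((Apo n N (stateAfter n N (OMM n) (Fin.last N) s y) : ℝ≥0∞) + 1) := by
                  rw [mul_add, mul_one]
              _ ≤ mutOp x y * (Apo n N s : ℝ≥0∞) := mul_le_mul_right (hApos y hy) _
          · rw [Set.indicator_of_notMem (fun h => hy (Finset.mem_coe.1 h)), add_zero]
            refine mul_le_mul_right ?_ _
            exact_mod_cast Apo_mono hN (Fin.last N) s y hInv
      _ = (Apo n N s : ℝ≥0∞) := by rw [ENNReal.tsum_mul_right, PMF.tsum_coe, one_mul]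
  have hmass : (Apo n N s : ℝ≥0∞) * c ≤ ∑ y ∈ T, mutOp x y := by
    calc (Apo n N s : ℝ≥0∞) * c = T.card * c := by rw [hcard]
      _ = ∑ _y ∈ T, c := by rw [Finset.sum_const, nsmul_eq_mul]
      _ ≤ ∑ y ∈ T, mutOp x y :=
          Finset.sum_le_sum fun y hy => hmut x y (hmemT y hy).2
  have hle : Ed (subStep n N (OMM n) mutOp (Fin.last N) s)
      (fun s' => (Apo n N s' : ℝ≥0∞)) + (Apo n N s : ℝ≥0∞) * c ≤ (Apo n N s : ℝ≥0∞) :=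
    le_trans (add_le_add_right hmass _) key
  have hfin : (Apo n N s : ℝ≥0∞) ≠ ⊤ := ENNReal.natCast_ne_top _
  have heq : (1 - c) * (Apo n N s : ℝ≥0∞)
      = (Apo n N s : ℝ≥0∞) - (Apo n N s : ℝ≥0∞) * c := by
    rw [ENNReal.sub_mul (fun _ _ => hfin), one_mul, mul_comm c]
  rw [heq]
  exact ENNReal.le_sub_of_add_le_right (ENNReal.mul_ne_top (ENNReal.natCast_ne_top _) ENNReal.ofReal_ne_top) hle

lemma Ed_B_zero
    (hmut : ∀ x y : BitString n, hamming x y = 1 → ENNReal.ofReal (p₁ / n) ≤ mutOp x y)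
    (s : MState n N) (hInv : Inv n N s) :
    Ed (subStep n N (OMM n) mutOp 0 s) (fun s' => (Bpo n N s' : ℝ≥0∞))
      ≤ (1 - ENNReal.ofReal (p₁ / n)) * (Bpo n N s : ℝ≥0∞) := by
  set c := ENNReal.ofReal (p₁ / n) with hc
  set x := s.pop (0 : Fin (N + 1)) with hx
  set T : Finset (BitString n) :=
    (Finset.univ.filter fun j => x j = false).image (fun j => Function.update x j true) with hT
  have hmemT : ∀ y ∈ T, ones y = ones x + 1 ∧ hamming x y = 1 := by
    intro y hy
    rw [hT, Finset.mem_image] at hy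
    obtain ⟨j, hj, rfl⟩ := hy
    rw [Finset.mem_filter] at hj
    exact ⟨ones_update_false hj.2, hamming_update (by simp [hj.2])⟩
  have hcard : T.card = Bpo n N s := by
    rw [hT, Finset.card_image_of_injOn]
    · have h1 : (Finset.univ.filter fun j => x j = false).card = zeros x := rfl
      have h2 := zeros_add_ones x
      have h3 : Bpo n N s = n - ones x := by rw [Bpo, ← hx]
      rw [h1, h3]
      omega
    · intro j hj j' hj' hjj
      by_contra hne
      rw [Finset.mem_coe, Finset.mem_filter] at hj hj'
      have h5 := congrFun hjj j
      dsimp only at h5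
      rw [Function.update_self, Function.update_of_ne hne, hj.2] at h5
      exact Bool.noConfusion h5
  have hApos : ∀ y ∈ T,
      (Bpo n N (stateAfter n N (OMM n) 0 s y) : ℝ≥0∞) + 1 ≤ (Bpo n N s : ℝ≥0∞) := by
    intro y hy
    obtain ⟨hzy, _⟩ := hmemT y hy
    have hacc := accept_zero s y hInv (by rw [← hx]; omega)
    have hyn : ones y ≤ n := ones_le y
    have : Bpo n N (stateAfter n N (OMM n) 0 s y) = n - (ones x + 1) := by
      rw [Bpo, hacc, hzy]
    rw [this]
    have h4 : Bpo n N s = n - ones x := by rw [Bpo, ← hx]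
    have hord : n - (ones x + 1) + 1 ≤ Bpo n N s := by rw [h4]; omega
    exact_mod_cast hord
  have key : Ed (subStep n N (OMM n) mutOp 0 s)
      (fun s' => (Bpo n N s' : ℝ≥0∞)) + ∑ y ∈ T, mutOp x y ≤ (Bpo n N s : ℝ≥0∞) := by
    rw [Ed_subStep, sum_eq_tsum_indicator, ← ENNReal.tsum_add]
    calc ∑' y, (mutOp x y * (Bpo n N (stateAfter n N (OMM n) 0 s y) : ℝ≥0∞)
          + Set.indicator (↑T) (⇑(mutOp x)) y)
        ≤ ∑' y, mutOp x y * (Bpo n N s : ℝ≥0∞) := by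
          refine ENNReal.tsum_le_tsum fun y => ?_
          by_cases hy : y ∈ T
          · rw [Set.indicator_of_mem (Finset.mem_coe.2 hy)]
            calc mutOp x y * (Bpo n N (stateAfter n N (OMM n) 0 s y) : ℝ≥0∞) + mutOp x y
                = mutOp x y * ((Bpo n N (stateAfter n N (OMM n) 0 s y) : ℝ≥0∞) + 1) := by
                  rw [mul_add, mul_one]
              _ ≤ mutOp x y * (Bpo n N s : ℝ≥0∞) := mul_le_mul_right (hApos y hy) _
          · rw [Set.indicator_of_notMem (fun h => hy (Finset.mem_coe.1 h)), add_zero]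
            refine mul_le_mul_right ?_ _
            exact_mod_cast Bpo_mono 0 s y hInv
      _ = (Bpo n N s : ℝ≥0∞) := by rw [ENNReal.tsum_mul_right, PMF.tsum_coe, one_mul]
  have hmass : (Bpo n N s : ℝ≥0∞) * c ≤ ∑ y ∈ T, mutOp x y := by
    calc (Bpo n N s : ℝ≥0∞) * c = T.card * c := by rw [hcard]
      _ = ∑ _y ∈ T, c := by rw [Finset.sum_const, nsmul_eq_mul]
      _ ≤ ∑ y ∈ T, mutOp x y :=
          Finset.sum_le_sum fun y hy => hmut x y (hmemT y hy).2
  have hle : Ed (subStep n N (OMM n) mutOp 0 s)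
      (fun s' => (Bpo n N s' : ℝ≥0∞)) + (Bpo n N s : ℝ≥0∞) * c ≤ (Bpo n N s : ℝ≥0∞) :=
    le_trans (add_le_add_right hmass _) key
  have hfin : (Bpo n N s : ℝ≥0∞) ≠ ⊤ := ENNReal.natCast_ne_top _
  have heq : (1 - c) * (Bpo n N s : ℝ≥0∞)
      = (Bpo n N s : ℝ≥0∞) - (Bpo n N s : ℝ≥0∞) * c := by
    rw [ENNReal.sub_mul (fun _ _ => hfin), one_mul, mul_comm c]
  rw [heq]
  exact ENNReal.le_sub_of_add_le_right (ENNReal.mul_ne_top (ENNReal.natCast_ne_top _) ENNReal.ofReal_ne_top) hle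

end Drift

section Iter

variable {p₁ : ℝ} {mutOp : BitString n → PMF (BitString n)}

lemma subStep_support_inv (i : Fin (N + 1)) (s : MState n N) (hInv : Inv n N s) :
    ∀ s' ∈ (subStep n N (OMM n) mutOp i s).support, Inv n N s' := by
  intro s' hs'
  rw [subStep_eq, PMF.mem_support_bind_iff] at hs'
  obtain ⟨y, _, hy⟩ := hs'
  rw [PMF.support_pure, Set.mem_singleton_iff] at hy
  rw [hy]
  exact Inv_stateAfter i s y hInv

lemma iterStep_eq (s : MState n N) :
    iterStep n N (OMM n) mutOp s
      = runL (subStep n N (OMM n) mutOp) (List.finRange (N + 1)) s := by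
  rw [iterStep, foldl_bind, PMF.pure_bind]

lemma iterStep_support_inv (s : MState n N) (hInv : Inv n N s) :
    ∀ s' ∈ (iterStep n N (OMM n) mutOp s).support, Inv n N s' := by
  rw [iterStep_eq]
  exact runL_support (fun i s hs => subStep_support_inv i s hs) _ s hInv

lemma prod_kappa (j : Fin (N + 1)) (r : ℝ≥0∞) :
    ((List.finRange (N + 1)).map fun i => if i = j then r else 1).prod = r := by
  rw [← Fin.prod_univ_def, Finset.prod_ite_eq' Finset.univ j fun _ => r]
  simp

lemma Ed_A_iter (hN : 1 ≤ N)
    (hmut : ∀ x y : BitString n, hamming x y = 1 → ENNReal.ofReal (p₁ / n) ≤ mutOp x y)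
    (s : MState n N) (hInv : Inv n N s) :
    Ed (iterStep n N (OMM n) mutOp s) (fun s' => (Apo n N s' : ℝ≥0∞))
      ≤ (1 - ENNReal.ofReal (p₁ / n)) * (Apo n N s : ℝ≥0∞) := by
  rw [iterStep_eq]
  have hd : ∀ (i : Fin (N + 1)) (s : MState n N), Inv n N s →
      Ed (subStep n N (OMM n) mutOp i s) (fun s' => (Apo n N s' : ℝ≥0∞))
        ≤ (if i = Fin.last N then 1 - ENNReal.ofReal (p₁ / n) else 1) * (Apo n N s : ℝ≥0∞) := by
    intro i s hs
    by_cases hi : i = Fin.last N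
    · subst hi; rw [if_pos rfl]; exact Ed_A_last hN hmut s hs
    · rw [if_neg hi, one_mul]; exact Ed_A_any hN i s hs
  have h := runL_Ed (fun i s hs => subStep_support_inv i s hs) hd (List.finRange (N + 1)) s hInv
  rwa [prod_kappa] at h

lemma Ed_B_iter
    (hmut : ∀ x y : BitString n, hamming x y = 1 → ENNReal.ofReal (p₁ / n) ≤ mutOp x y)
    (s : MState n N) (hInv : Inv n N s) :
    Ed (iterStep n N (OMM n) mutOp s) (fun s' => (Bpo n N s' : ℝ≥0∞))
      ≤ (1 - ENNReal.ofReal (p₁ / n)) * (Bpo n N s : ℝ≥0∞) := by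
  rw [iterStep_eq]
  have hd : ∀ (i : Fin (N + 1)) (s : MState n N), Inv n N s →
      Ed (subStep n N (OMM n) mutOp i s) (fun s' => (Bpo n N s' : ℝ≥0∞))
        ≤ (if i = 0 then 1 - ENNReal.ofReal (p₁ / n) else 1) * (Bpo n N s : ℝ≥0∞) := by
    intro i s hs
    by_cases hi : i = 0
    · subst hi; rw [if_pos rfl]; exact Ed_B_zero hmut s hs
    · rw [if_neg hi, one_mul]; exact Ed_B_any i s hs
  have h := runL_Ed (fun i s hs => subStep_support_inv i s hs) hd (List.finRange (N + 1)) s hInv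
  rwa [prod_kappa] at h

end Iter

section Chain

/-- Law of the state after `t` iterations. -/
def msIter {S : Type*} (init : PMF S) (step : S → PMF S) : ℕ → PMF S
  | 0 => init
  | t + 1 => (msIter init step t).bind step

lemma hist_fst {S : Type*} (init : PMF S) (step : S → PMF S) (t : ℕ) :
    (histPMF init step t).map Prod.fst = msIter init step t := by
  induction t with
  | zero =>
      show (init.map fun s => (s, [s])).map Prod.fst = init
      rw [PMF.map_comp]
      exact PMF.map_id init
  | succ t ih =>
      show ((histPMF init step t).bind fun p =>
        (step p.1).map fun s' => (s', s' :: p.2)).map Prod.fst = _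
      rw [PMF.map_bind]
      have h1 : ∀ p : S × List S,
          ((step p.1).map fun s' => (s', s' :: p.2)).map Prod.fst = step p.1 := by
        intro p
        rw [PMF.map_comp]
        exact PMF.map_id _
      simp only [h1]
      have h2 : ((histPMF init step t).bind fun p => step p.1)
          = ((histPMF init step t).map Prod.fst).bind step := by
        rw [PMF.bind_map]
        rfl
      rw [h2, ih]
      rfl

lemma hist_head {S : Type*} (init : PMF S) (step : S → PMF S) (t : ℕ) :
    ∀ p ∈ (histPMF init step t).support, p.1 ∈ p.2 := by
  induction t with
  | zero =>
      intro p hp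
      have h : histPMF init step 0 = init.map fun s => (s, [s]) := rfl
      rw [h, PMF.support_map] at hp
      obtain ⟨s, _, rfl⟩ := hp
      simp
  | succ t ih =>
      intro p hp
      have h : histPMF init step (t + 1)
          = (histPMF init step t).bind fun p => (step p.1).map fun s' => (s', s' :: p.2) := rfl
      rw [h, PMF.mem_support_bind_iff] at hp
      obtain ⟨q, _, hp⟩ := hp
      rw [PMF.support_map] at hp
      obtain ⟨s', _, rfl⟩ := hp
      simp

lemma survival_le_ms {S : Type*} (init : PMF S) (step : S → PMF S) (done : S → Prop) (t : ℕ) :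
    survivalProb init step done t
      ≤ (msIter init step t).toOuterMeasure {s | ¬ done s} := by
  rw [survivalProb, ← hist_fst init step t, PMF.toOuterMeasure_map_apply,
    PMF.toOuterMeasure_apply, PMF.toOuterMeasure_apply]
  refine ENNReal.tsum_le_tsum fun p => ?_
  by_cases hp : p ∈ (histPMF init step t).support
  · by_cases hE : ∀ s ∈ p.2, ¬ done s
    · rw [Set.indicator_of_mem (show p ∈ {p : S × List S | ∀ s ∈ p.2, ¬ done s} from hE),
        Set.indicator_of_mem
          (show p ∈ Prod.fst ⁻¹' {s | ¬ done s} from hE p.1 (hist_head init step t p hp))]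
    · rw [Set.indicator_of_notMem (show p ∉ {p : S × List S | ∀ s ∈ p.2, ¬ done s} from hE)]
      exact zero_le
  · have h0 : (histPMF init step t) p = 0 := by simpa [PMF.mem_support_iff] using hp
    by_cases hE : p ∈ {p : S × List S | ∀ s ∈ p.2, ¬ done s}
    · rw [Set.indicator_of_mem hE, h0]
      exact zero_le
    · rw [Set.indicator_of_notMem hE]
      exact zero_le

lemma survival_le_one {S : Type*} (init : PMF S) (step : S → PMF S) (done : S → Prop) (t : ℕ) :
    survivalProb init step done t ≤ 1 := by
  rw [survivalProb]
  exact prob_le_one _ _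

end Chain

section Glue

variable {p₁ : ℝ} {mutOp : BitString n → PMF (BitString n)}

lemma done_of_Apo_Bpo (s : MState n N) (hInv : Inv n N s) (hA : Apo n N s = 0)
    (hB : Bpo n N s = 0) : s.ref = ((n : ℝ), (n : ℝ)) := by
  have hA' : n - zeros (s.pop (Fin.last N)) = 0 := hA
  have hB' : n - ones (s.pop 0) = 0 := hB
  have hz : zeros (s.pop (Fin.last N)) = n := by
    have := zeros_le (s.pop (Fin.last N)); omega
  have ho : ones (s.pop 0) = n := by
    have := ones_le (s.pop 0); omega
  have h1 : s.ref.1 = n := by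
    have hle := hInv.1.1
    rw [hz] at hle
    exact le_antisymm hInv.1.2 hle
  have h2 : s.ref.2 = n := by
    have hle := hInv.2.1
    rw [ho] at hle
    exact le_antisymm hInv.2.2 hle
  rw [Prod.ext_iff]
  exact ⟨h1, h2⟩

lemma Inv_initState (pop : Fin (N + 1) → BitString n) :
    Inv n N (initState n N (OMM n) pop) := by
  refine ⟨⟨?_, ?_⟩, ?_, ?_⟩
  · show (zeros (pop (Fin.last N)) : ℝ) ≤ ⨆ i, (OMM n (pop i)).1
    have hb : BddAbove (Set.range fun i : Fin (N + 1) => (OMM n (pop i)).1) :=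
      (Set.finite_range _).bddAbove
    have h := le_ciSup hb (Fin.last N)
    simpa [OMM] using h
  · show (⨆ i, (OMM n (pop i)).1) ≤ (n : ℝ)
    refine ciSup_le fun i => ?_
    simp only [OMM]
    exact_mod_cast zeros_le _
  · show (ones (pop 0) : ℝ) ≤ ⨆ i, (OMM n (pop i)).2
    have hb : BddAbove (Set.range fun i : Fin (N + 1) => (OMM n (pop i)).2) :=
      (Set.finite_range _).bddAbove
    have h := le_ciSup hb (0 : Fin (N + 1))
    simpa [OMM] using h
  · show (⨆ i, (OMM n (pop i)).2) ≤ (n : ℝ)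
    refine ciSup_le fun i => ?_
    simp only [OMM]
    exact_mod_cast ones_le _

lemma Inv_initPMF : ∀ s ∈ (initPMF n N (OMM n)).support, Inv n N s := by
  intro s hs
  rw [initPMF, PMF.support_map] at hs
  obtain ⟨pop, _, rfl⟩ := hs
  exact Inv_initState pop

lemma ms_support_inv (t : ℕ) :
    ∀ s ∈ (msIter (initPMF n N (OMM n)) (iterStep n N (OMM n) mutOp) t).support,
      Inv n N s := by
  induction t with
  | zero => exact Inv_initPMF
  | succ t ih =>
      intro s' hs'
      have h : msIter (initPMF n N (OMM n)) (iterStep n N (OMM n) mutOp) (t + 1)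
          = (msIter (initPMF n N (OMM n)) (iterStep n N (OMM n) mutOp) t).bind
              (iterStep n N (OMM n) mutOp) := rfl
      rw [h, PMF.mem_support_bind_iff] at hs'
      obtain ⟨s, hs, hs'⟩ := hs'
      exact iterStep_support_inv s (ih s hs) s' hs'

lemma Ed_ms_A (hN : 1 ≤ N)
    (hmut : ∀ x y : BitString n, hamming x y = 1 → ENNReal.ofReal (p₁ / n) ≤ mutOp x y)
    (t : ℕ) :
    Ed (msIter (initPMF n N (OMM n)) (iterStep n N (OMM n) mutOp) t)
        (fun s => (Apo n N s : ℝ≥0∞))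
      ≤ (1 - ENNReal.ofReal (p₁ / n)) ^ t * n := by
  induction t with
  | zero =>
      calc Ed (initPMF n N (OMM n)) (fun s => (Apo n N s : ℝ≥0∞)) ≤ (n : ℝ≥0∞) := by
            refine Ed_le_const fun s _ => ?_
            exact_mod_cast Nat.sub_le n (zeros (s.pop (Fin.last N)))
        _ = (1 - ENNReal.ofReal (p₁ / n)) ^ 0 * n := by rw [pow_zero, one_mul]
  | succ t ih =>
      have hstep : msIter (initPMF n N (OMM n)) (iterStep n N (OMM n) mutOp) (t + 1)
          = (msIter (initPMF n N (OMM n)) (iterStep n N (OMM n) mutOp) t).bind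
              (iterStep n N (OMM n) mutOp) := rfl
      rw [hstep, Ed_bind]
      calc ∑' s, (msIter (initPMF n N (OMM n)) (iterStep n N (OMM n) mutOp) t) s
            * Ed (iterStep n N (OMM n) mutOp s) (fun s => (Apo n N s : ℝ≥0∞))
          ≤ ∑' s, (msIter (initPMF n N (OMM n)) (iterStep n N (OMM n) mutOp) t) s
            * ((1 - ENNReal.ofReal (p₁ / n)) * (Apo n N s : ℝ≥0∞)) := by
            refine ENNReal.tsum_le_tsum fun s => ?_
            by_cases hs : s ∈ (msIter (initPMF n N (OMM n)) (iterStep n N (OMM n) mutOp) t).support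
            · exact mul_le_mul_right (Ed_A_iter hN hmut s (ms_support_inv t s hs)) _
            · have h0 : (msIter (initPMF n N (OMM n)) (iterStep n N (OMM n) mutOp) t) s = 0 := by
                simpa [PMF.mem_support_iff] using hs
              simp [h0]
        _ = (1 - ENNReal.ofReal (p₁ / n))
            * Ed (msIter (initPMF n N (OMM n)) (iterStep n N (OMM n) mutOp) t)
                (fun s => (Apo n N s : ℝ≥0∞)) := by
            rw [Ed, ← ENNReal.tsum_mul_left]
            congr 1; ext s; ring
        _ ≤ (1 - ENNReal.ofReal (p₁ / n)) * ((1 - ENNReal.ofReal (p₁ / n)) ^ t * n) :=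
            mul_le_mul_right ih _
        _ = (1 - ENNReal.ofReal (p₁ / n)) ^ (t + 1) * n := by rw [pow_succ]; ring

lemma Ed_ms_B (hN : 1 ≤ N)
    (hmut : ∀ x y : BitString n, hamming x y = 1 → ENNReal.ofReal (p₁ / n) ≤ mutOp x y)
    (t : ℕ) :
    Ed (msIter (initPMF n N (OMM n)) (iterStep n N (OMM n) mutOp) t)
        (fun s => (Bpo n N s : ℝ≥0∞))
      ≤ (1 - ENNReal.ofReal (p₁ / n)) ^ t * n := by
  induction t with
  | zero =>
      calc Ed (initPMF n N (OMM n)) (fun s => (Bpo n N s : ℝ≥0∞)) ≤ (n : ℝ≥0∞) := by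
            refine Ed_le_const fun s _ => ?_
            exact_mod_cast Nat.sub_le n (ones (s.pop 0))
        _ = (1 - ENNReal.ofReal (p₁ / n)) ^ 0 * n := by rw [pow_zero, one_mul]
  | succ t ih =>
      have hstep : msIter (initPMF n N (OMM n)) (iterStep n N (OMM n) mutOp) (t + 1)
          = (msIter (initPMF n N (OMM n)) (iterStep n N (OMM n) mutOp) t).bind
              (iterStep n N (OMM n) mutOp) := rfl
      rw [hstep, Ed_bind]
      calc ∑' s, (msIter (initPMF n N (OMM n)) (iterStep n N (OMM n) mutOp) t) s
            * Ed (iterStep n N (OMM n) mutOp s) (fun s => (Bpo n N s : ℝ≥0∞))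
          ≤ ∑' s, (msIter (initPMF n N (OMM n)) (iterStep n N (OMM n) mutOp) t) s
            * ((1 - ENNReal.ofReal (p₁ / n)) * (Bpo n N s : ℝ≥0∞)) := by
            refine ENNReal.tsum_le_tsum fun s => ?_
            by_cases hs : s ∈ (msIter (initPMF n N (OMM n)) (iterStep n N (OMM n) mutOp) t).support
            · exact mul_le_mul_right (Ed_B_iter hmut s (ms_support_inv t s hs)) _
            · have h0 : (msIter (initPMF n N (OMM n)) (iterStep n N (OMM n) mutOp) t) s = 0 := by
                simpa [PMF.mem_support_iff] using hs
              simp [h0]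
        _ = (1 - ENNReal.ofReal (p₁ / n))
            * Ed (msIter (initPMF n N (OMM n)) (iterStep n N (OMM n) mutOp) t)
                (fun s => (Bpo n N s : ℝ≥0∞)) := by
            rw [Ed, ← ENNReal.tsum_mul_left]
            congr 1; ext s; ring
        _ ≤ (1 - ENNReal.ofReal (p₁ / n)) * ((1 - ENNReal.ofReal (p₁ / n)) ^ t * n) :=
            mul_le_mul_right ih _
        _ = (1 - ENNReal.ofReal (p₁ / n)) ^ (t + 1) * n := by rw [pow_succ]; ring

lemma survival_bound (hN : 1 ≤ N)
    (hmut : ∀ x y : BitString n, hamming x y = 1 → ENNReal.ofReal (p₁ / n) ≤ mutOp x y)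
    (t : ℕ) :
    survivalProb (initPMF n N (OMM n)) (iterStep n N (OMM n) mutOp)
        (fun s => s.ref = ((n : ℝ), (n : ℝ))) t
      ≤ 2 * n * (1 - ENNReal.ofReal (p₁ / n)) ^ t := by
  refine le_trans (survival_le_ms _ _ _ t) ?_
  have hprob : (msIter (initPMF n N (OMM n)) (iterStep n N (OMM n) mutOp) t).toOuterMeasure
      {s | ¬ s.ref = ((n : ℝ), (n : ℝ))}
      ≤ Ed (msIter (initPMF n N (OMM n)) (iterStep n N (OMM n) mutOp) t)
          (fun s => (Apo n N s : ℝ≥0∞) + (Bpo n N s : ℝ≥0∞)) := by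
    refine prob_le_Ed fun s hs hE => ?_
    have hInv := ms_support_inv t s hs
    show (1 : ℝ≥0∞) ≤ (Apo n N s : ℝ≥0∞) + (Bpo n N s : ℝ≥0∞)
    by_cases hA : Apo n N s = 0
    · by_cases hB : Bpo n N s = 0
      · exact absurd (done_of_Apo_Bpo s hInv hA hB) hE
      · have : 1 ≤ Bpo n N s := Nat.one_le_iff_ne_zero.2 hB
        calc (1 : ℝ≥0∞) ≤ (Bpo n N s : ℝ≥0∞) := by exact_mod_cast this
          _ ≤ (Apo n N s : ℝ≥0∞) + (Bpo n N s : ℝ≥0∞) := le_add_self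
    · have : 1 ≤ Apo n N s := Nat.one_le_iff_ne_zero.2 hA
      calc (1 : ℝ≥0∞) ≤ (Apo n N s : ℝ≥0∞) := by exact_mod_cast this
        _ ≤ (Apo n N s : ℝ≥0∞) + (Bpo n N s : ℝ≥0∞) := le_self_add
  refine le_trans hprob ?_
  rw [Ed_add]
  calc Ed (msIter (initPMF n N (OMM n)) (iterStep n N (OMM n) mutOp) t)
        (fun s => (Apo n N s : ℝ≥0∞))
      + Ed (msIter (initPMF n N (OMM n)) (iterStep n N (OMM n) mutOp) t)
        (fun s => (Bpo n N s : ℝ≥0∞))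
      ≤ (1 - ENNReal.ofReal (p₁ / n)) ^ t * n + (1 - ENNReal.ofReal (p₁ / n)) ^ t * n :=
        add_le_add (Ed_ms_A hN hmut t) (Ed_ms_B hN hmut t)
    _ = 2 * n * (1 - ENNReal.ofReal (p₁ / n)) ^ t := by ring

end Glue

end MoeadAux


/-- For any mutation operator that produces each Hamming neighbor of the
parent with probability at least `p₁/n`, the expected number of function evaluations of
the MOEA/D maximizing OneMinMax until the reference point satisfies `z* = (n, n)` is at
most `C·(n/p₁)·N·ln n` for an absolute constant `C`. -/
theorem moead_omm_reference_point :
    ∃ C : ℝ, 0 < C ∧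
      ∀ n N : ℕ, 2 ≤ n → 1 ≤ N → N ≤ n → N ∣ n →
        ∀ p₁ : ℝ, 0 < p₁ → p₁ ≤ 1 →
          ∀ mutOp : BitString n → PMF (BitString n),
            (∀ x y : BitString n, hamming x y = 1 → ENNReal.ofReal (p₁ / n) ≤ mutOp x y) →
            expectedEvals n N (OMM n) mutOp (fun s => s.ref = ((n : ℝ), (n : ℝ)))
              ≤ ENNReal.ofReal (C * ((n : ℝ) / p₁) * N * Real.log n) := by
  classical
  refine ⟨12, by norm_num, ?_⟩
  intro n N hn hN1 hNn hdvd p₁ hp1 hp2 mutOp hmut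
  open MoeadAux in
  have hn2 : (2 : ℝ) ≤ n := by exact_mod_cast hn
  have hn0 : (0 : ℝ) < n := by linarith
  have hpn_pos : 0 < p₁ / n := div_pos hp1 hn0
  have hpn_le : p₁ / n ≤ 1 := by
    rw [div_le_one hn0]
    have : (2 : ℝ) ≤ n := by exact_mod_cast hn
    linarith
  set c : ℝ≥0∞ := ENNReal.ofReal (p₁ / n) with hc
  set r : ℝ≥0∞ := 1 - c with hr
  have hc1 : c ≤ 1 := by rw [hc]; exact ENNReal.ofReal_le_one.2 hpn_le
  have hrof : ENNReal.ofReal (1 - p₁ / n) = r := by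
    rw [ENNReal.ofReal_sub _ (le_of_lt hpn_pos), ENNReal.ofReal_one, hr, hc]
  set t₀ : ℕ := ⌈(n / p₁) * Real.log (2 * n)⌉₊ with ht₀
  set surv : ℕ → ℝ≥0∞ := survivalProb (initPMF n N (OMM n)) (iterStep n N (OMM n) mutOp)
      (fun s => s.ref = ((n : ℝ), (n : ℝ))) with hsurv
  have hsb : ∀ t, surv t ≤ 2 * n * r ^ t := fun t => survival_bound hN1 hmut t
  have hS : ∑' t, surv t ≤ (t₀ : ℝ≥0∞) + 2 * n * r ^ t₀ * (1 - r)⁻¹ := by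
    rw [tsum_split surv t₀]
    refine add_le_add ?_ ?_
    · calc ∑ i ∈ Finset.range t₀, surv i ≤ ∑ _i ∈ Finset.range t₀, (1 : ℝ≥0∞) :=
            Finset.sum_le_sum fun i _ => survival_le_one _ _ _ i
        _ = t₀ := by simp
    · calc ∑' t, surv (t + t₀) ≤ ∑' t, 2 * n * r ^ (t + t₀) :=
            ENNReal.tsum_le_tsum fun t => hsb (t + t₀)
        _ = 2 * n * r ^ t₀ * ∑' t, r ^ t := by
            rw [← ENNReal.tsum_mul_left]
            congr 1; ext t; rw [pow_add]; ring
        _ = 2 * n * r ^ t₀ * (1 - r)⁻¹ := by rw [ENNReal.tsum_geometric]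
  have h1r : 1 - r = c := by rw [hr]; exact ENNReal.sub_sub_cancel ENNReal.one_ne_top hc1
  have hinvr : (1 - r)⁻¹ = ENNReal.ofReal (n / p₁) := by
    rw [h1r, hc, ← ENNReal.ofReal_inv_of_pos hpn_pos, inv_div]
  have h2n : (0 : ℝ) < 2 * n := by linarith
  have hrt : r ^ t₀ ≤ ENNReal.ofReal ((2 * n : ℝ))⁻¹ := by
    rw [← hrof, ← ENNReal.ofReal_pow (by linarith : (0 : ℝ) ≤ 1 - p₁ / n)]
    refine ENNReal.ofReal_le_ofReal ?_
    have hexp1 : (1 - p₁ / n : ℝ) ≤ Real.exp (-(p₁ / n)) := by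
      have := Real.add_one_le_exp (-(p₁ / n)); linarith
    have hlog : Real.log (2 * n) ≤ (p₁ / n) * t₀ := by
      have hceil : (n / p₁) * Real.log (2 * n) ≤ (t₀ : ℝ) := Nat.le_ceil _
      have hiden : Real.log (2 * n) = (p₁ / n) * ((n / p₁) * Real.log (2 * n)) := by
        field_simp
      rw [hiden]
      exact mul_le_mul_of_nonneg_left hceil (le_of_lt hpn_pos)
    calc (1 - p₁ / n) ^ t₀ ≤ Real.exp (-(p₁ / n)) ^ t₀ :=
          pow_le_pow_left₀ (by linarith) hexp1 t₀
      _ = Real.exp (-((p₁ / n) * t₀)) := by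
          rw [← Real.exp_nat_mul]; ring_nf
      _ ≤ Real.exp (-(Real.log (2 * n))) := Real.exp_le_exp.2 (by linarith)
      _ = (2 * (n : ℝ))⁻¹ := by rw [Real.exp_neg, Real.exp_log h2n]
  have htail : 2 * (n : ℝ≥0∞) * r ^ t₀ * (1 - r)⁻¹ ≤ ENNReal.ofReal (n / p₁) := by
    rw [hinvr]
    have h2 : 2 * (n : ℝ≥0∞) = ENNReal.ofReal (2 * n) := by
      rw [ENNReal.ofReal_mul (by norm_num : (0:ℝ) ≤ 2), ENNReal.ofReal_ofNat,
        ENNReal.ofReal_natCast]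
    calc 2 * (n : ℝ≥0∞) * r ^ t₀ * ENNReal.ofReal (n / p₁)
        ≤ ENNReal.ofReal (2 * n) * ENNReal.ofReal ((2 * n : ℝ))⁻¹ * ENNReal.ofReal (n / p₁) := by
          rw [← h2]
          exact mul_le_mul' (mul_le_mul' le_rfl hrt) le_rfl
      _ = ENNReal.ofReal (2 * n * (2 * n : ℝ)⁻¹ * (n / p₁)) := by
          rw [← ENNReal.ofReal_mul (by positivity : (0:ℝ) ≤ 2 * n),
            ← ENNReal.ofReal_mul (by positivity : (0:ℝ) ≤ 2 * n * (2 * (n:ℝ))⁻¹)]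
      _ = ENNReal.ofReal (n / p₁) := by
          rw [mul_inv_cancel₀ (ne_of_gt h2n), one_mul]
  have hlog2n_nn : (0 : ℝ) ≤ (n / p₁) * Real.log (2 * n) :=
    mul_nonneg (by positivity) (Real.log_nonneg (by linarith))
  have ht0R : (t₀ : ℝ≥0∞) ≤ ENNReal.ofReal ((n / p₁) * Real.log (2 * n) + 1) := by
    rw [← ENNReal.ofReal_natCast]
    exact ENNReal.ofReal_le_ofReal (le_of_lt (Nat.ceil_lt_add_one hlog2n_nn))
  have hS2 : ∑' t, surv t ≤ ENNReal.ofReal ((n / p₁) * Real.log (2 * n) + 1 + n / p₁) := by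
    refine le_trans hS ?_
    calc (t₀ : ℝ≥0∞) + 2 * n * r ^ t₀ * (1 - r)⁻¹
        ≤ ENNReal.ofReal ((n / p₁) * Real.log (2 * n) + 1) + ENNReal.ofReal (n / p₁) :=
          add_le_add ht0R htail
      _ = ENNReal.ofReal ((n / p₁) * Real.log (2 * n) + 1 + n / p₁) :=
          (ENNReal.ofReal_add (by positivity) (by positivity)).symm
  rw [expectedEvals]
  have hNof : ((N : ℝ≥0∞) + 1) = ENNReal.ofReal ((N : ℝ) + 1) := by
    rw [ENNReal.ofReal_add (by positivity) (by norm_num), ENNReal.ofReal_natCast,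
      ENNReal.ofReal_one]
  have hsum : (1 : ℝ≥0∞) + ∑' t, surv t
      ≤ ENNReal.ofReal (1 + ((n / p₁) * Real.log (2 * n) + 1 + n / p₁)) := by
    rw [ENNReal.ofReal_add (by norm_num) (by positivity), ENNReal.ofReal_one]
    exact add_le_add le_rfl hS2
  calc ((N : ℝ≥0∞) + 1) * (1 + ∑' t, surv t)
      ≤ ENNReal.ofReal ((N : ℝ) + 1)
        * ENNReal.ofReal (1 + ((n / p₁) * Real.log (2 * n) + 1 + n / p₁)) := by
        rw [← hNof]
        exact mul_le_mul' le_rfl hsum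
    _ = ENNReal.ofReal (((N : ℝ) + 1) * (1 + ((n / p₁) * Real.log (2 * n) + 1 + n / p₁))) :=
        (ENNReal.ofReal_mul (by positivity)).symm
    _ ≤ ENNReal.ofReal (12 * ((n : ℝ) / p₁) * N * Real.log n) := by
        refine ENNReal.ofReal_le_ofReal ?_
        set u : ℝ := (n : ℝ) / p₁ with hu'
        set L : ℝ := Real.log n with hL'
        have hu : (2 : ℝ) ≤ u := by
          rw [hu', le_div_iff₀ hp1]
          have : (2 : ℝ) ≤ n := by exact_mod_cast hn
          nlinarith
        have hL2 : (0.6931 : ℝ) ≤ Real.log 2 := by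
          have := Real.log_two_gt_d9
          linarith
        have hLlog : Real.log 2 ≤ L := by
          rw [hL']
          exact Real.log_le_log (by norm_num) (by exact_mod_cast hn)
        have hlog2n : Real.log (2 * n) = Real.log 2 + L := by
          rw [hL', Real.log_mul (by norm_num) (ne_of_gt hn0)]
        have hN1' : (1 : ℝ) ≤ N := by exact_mod_cast hN1
        have huL : (1.38 : ℝ) ≤ u * L := by nlinarith
        have hulog2 : u * Real.log 2 ≤ u * L := by nlinarith
        have huLu : u ≤ 2 * (u * L) := by nlinarith
        rw [hlog2n]
        have hassoc : (1 + (u * (Real.log 2 + L) + 1 + u))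
            = 2 + (u * Real.log 2 + u * L) + u := by ring
        rw [hassoc]
        have h6 : 2 + (u * Real.log 2 + u * L) + u ≤ 6 * (u * L) := by nlinarith
        have h6nn : (0 : ℝ) ≤ 6 * (u * L) := by nlinarith
        calc ((N : ℝ) + 1) * (2 + (u * Real.log 2 + u * L) + u)
            ≤ ((N : ℝ) + 1) * (6 * (u * L)) := by
              refine mul_le_mul_of_nonneg_left h6 (by linarith)
          _ ≤ (2 * N) * (6 * (u * L)) := by
              refine mul_le_mul_of_nonneg_right (by linarith) h6nn
          _ = 12 * u * N * L := by ring


end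
end

section
/- For every β ∈ (1,2) there exists a constant c > 0 (depending only on β) such that the following holds for all integers n ≥ 2, all N ∈ [1..n] with N dividing n, all x_0,…,x_N ∈ {0,1}^n with |x_j|_0 = j·n/N for every j ∈ [0..N], and every integer u with 1 ≤ u ≤ n/2 − 1: if y_0,…,y_N are obtained by applying power-law mutation with exponent β independently to x_0,…,x_N, then the probability that there exists j ∈ [0..N] with |y_j|_0 = u is at least c·N·n^{−β}. -/
open scoped ENNReal Classical

noncomputable section

/-- The joint law of `m` independent samples, one from each of the given distributions. -/
def jointPMF {α : Type*} [Inhabited α] {m : ℕ} (μ : Fin m → PMF α) : PMF (Fin m → α) :=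
  (List.finRange m).foldl
    (fun p i => p.bind fun g => (μ i).map fun y => Function.update g i y)
    (PMF.pure fun _ => default)

/-- flip `x` at positions in `S`. -/
def flipSet {n : ℕ} (x : BitString n) (S : Finset (Fin n)) : BitString n :=
  fun i => if i ∈ S then !(x i) else x i

lemma hamming_flipSet {n : ℕ} (x : BitString n) (S : Finset (Fin n)) :
    hamming x (flipSet x S) = S.card := by
  unfold hamming
  congr 1
  ext i
  by_cases h : i ∈ S <;> simp [flipSet, h]

lemma flipSet_diff {n : ℕ} (x y : BitString n) :
    flipSet x (Finset.univ.filter (fun i => x i ≠ y i)) = y := by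
  funext i
  by_cases h : x i = y i
  · simp [flipSet, h]
  · simp only [flipSet, Finset.mem_filter, Finset.mem_univ, true_and, if_pos h]
    cases hx : x i <;> cases hy : y i <;> simp_all

lemma card_y_eq_card_S {n : ℕ} (x : BitString n) (u d : ℕ) :
    (Finset.univ.filter (fun y : BitString n => zeros y = u ∧ hamming x y = d)).card
    = (Finset.univ.filter (fun S : Finset (Fin n) => S.card = d ∧ zeros (flipSet x S) = u)).card := by
  apply Finset.card_nbij' (i := fun y => Finset.univ.filter (fun i => x i ≠ y i))
      (j := fun S => flipSet x S)
  · intro y hy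
    simp only [Finset.coe_filter, Set.mem_setOf_eq, Finset.mem_filter, Finset.mem_univ, true_and] at hy ⊢
    constructor
    · exact hy.2
    · rw [flipSet_diff]; exact hy.1
  · intro S hS
    simp only [Finset.coe_filter, Set.mem_setOf_eq, Finset.mem_filter, Finset.mem_univ, true_and] at hS ⊢
    refine ⟨hS.2, ?_⟩
    rw [hamming_flipSet]; exact hS.1
  · intro y _
    exact flipSet_diff x y
  · intro S _
    ext i
    by_cases h : i ∈ S <;> simp [flipSet, h]


/-- count of sets of size d whose flip has at most u zeros -/
def Acnt {n : ℕ} (x : BitString n) (u d : ℕ) : ℕ :=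
  (Finset.univ.filter (fun S : Finset (Fin n) => S.card = d ∧ zeros (flipSet x S) ≤ u)).card

def Bcnt {n : ℕ} (x : BitString n) (u d : ℕ) : ℕ :=
  (Finset.univ.filter (fun S : Finset (Fin n) => S.card = d ∧ zeros (flipSet x S) = u)).card

lemma zeros_flip_insert {n : ℕ} (x : BitString n) (S : Finset (Fin n)) (e : Fin n) (he : e ∉ S) :
    zeros (flipSet x (insert e S)) ≤ zeros (flipSet x S) + 1 := by
  unfold zeros
  have hsub : (Finset.univ.filter (fun i => flipSet x (insert e S) i = false))
      ⊆ insert e (Finset.univ.filter (fun i => flipSet x S i = false)) := by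
    intro i hi
    simp only [Finset.mem_filter, Finset.mem_univ, true_and] at hi
    by_cases hie : i = e
    · rw [hie]; exact Finset.mem_insert_self _ _
    · apply Finset.mem_insert_of_mem
      simp only [Finset.mem_filter, Finset.mem_univ, true_and]
      have : flipSet x (insert e S) i = flipSet x S i := by
        simp only [flipSet, Finset.mem_insert]
        by_cases hiS : i ∈ S <;> simp [hiS, hie]
      rwa [this] at hi
  calc _ ≤ (insert e (Finset.univ.filter (fun i => flipSet x S i = false))).card :=
        Finset.card_le_card hsub
    _ ≤ _ := Finset.card_insert_le _ _

lemma zeros_flip_ge {n : ℕ} (x : BitString n) (S : Finset (Fin n)) :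
    S.card ≤ zeros (flipSet x S) + zeros x := by
  have h1 : S.filter (fun i => x i = true) ⊆ Finset.univ.filter (fun i => flipSet x S i = false) := by
    intro i hi
    simp only [Finset.mem_filter, Finset.mem_univ, true_and] at hi ⊢
    simp [flipSet, hi.1, hi.2]
  have h2 : S.filter (fun i => ¬ (x i = true)) ⊆ Finset.univ.filter (fun i => x i = false) := by
    intro i hi
    simp only [Finset.mem_filter, Finset.mem_univ, true_and, Bool.not_eq_true] at hi ⊢
    exact hi.2
  calc S.card = (S.filter (fun i => x i = true)).card + (S.filter (fun i => ¬ (x i = true))).card :=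
        (Finset.card_filter_add_card_filter_not _).symm
    _ ≤ zeros (flipSet x S) + zeros x :=
        Nat.add_le_add (Finset.card_le_card h1) (Finset.card_le_card h2)

lemma Acnt_split {n : ℕ} (x : BitString n) (u d : ℕ) (hu : 1 ≤ u) :
    Acnt x u d = Acnt x (u - 1) d + Bcnt x u d := by
  unfold Acnt Bcnt
  rw [← Finset.card_filter_add_card_filter_not
    (s := Finset.univ.filter (fun S : Finset (Fin n) => S.card = d ∧ zeros (flipSet x S) ≤ u))
    (p := fun S => zeros (flipSet x S) ≤ u - 1)]
  congr 1
  · rw [Finset.filter_filter]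
    congr 1
    ext S
    simp only [Finset.mem_filter, Finset.mem_univ, true_and]
    omega
  · rw [Finset.filter_filter]
    congr 1
    ext S
    simp only [Finset.mem_filter, Finset.mem_univ, true_and]
    omega

lemma Acnt_zero {n : ℕ} (x : BitString n) (u : ℕ) (h : zeros x ≤ u) : Acnt x u 0 = 1 := by
  unfold Acnt
  have : (Finset.univ.filter (fun S : Finset (Fin n) => S.card = 0 ∧ zeros (flipSet x S) ≤ u))
      = {∅} := by
    ext S
    simp only [Finset.mem_filter, Finset.mem_univ, true_and, Finset.mem_singleton,
      Finset.card_eq_zero]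
    constructor
    · rintro ⟨rfl, _⟩; rfl
    · rintro rfl
      refine ⟨rfl, ?_⟩
      have : flipSet x ∅ = x := by funext i; simp [flipSet]
      rwa [this]
  rw [this, Finset.card_singleton]

lemma Acnt_top {n : ℕ} (x : BitString n) (u : ℕ) : Acnt x u (zeros x + u + 1) = 0 := by
  unfold Acnt
  rw [Finset.card_eq_zero, Finset.filter_eq_empty_iff]
  rintro S -
  rintro ⟨hcard, hz⟩
  have := zeros_flip_ge x S
  omega

lemma Acnt_step {n : ℕ} (x : BitString n) (u d : ℕ) (hu : 1 ≤ u) :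
    Acnt x (u - 1) d * (n - d) ≤ Acnt x u (d + 1) * (d + 1) := by
  unfold Acnt
  apply Finset.card_mul_le_card_mul (fun S T => S ⊆ T)
  · -- every small set has at least n - d extensions
    intro S hS
    simp only [Finset.mem_filter, Finset.mem_univ, true_and] at hS
    have hmaps : ∀ e ∈ Sᶜ, insert e S ∈ (Finset.univ.filter
        (fun T : Finset (Fin n) => T.card = d + 1 ∧ zeros (flipSet x T) ≤ u)).bipartiteAbove
        (fun S T => S ⊆ T) S := by
      intro e he
      simp only [Finset.mem_compl] at he
      simp only [Finset.bipartiteAbove, Finset.mem_filter, Finset.mem_univ, true_and]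
      refine ⟨⟨?_, ?_⟩, Finset.subset_insert _ _⟩
      · rw [Finset.card_insert_of_notMem he, hS.1]
      · calc zeros (flipSet x (insert e S)) ≤ zeros (flipSet x S) + 1 :=
              zeros_flip_insert x S e he
          _ ≤ u := by have := hS.2; omega

    have hinj : Set.InjOn (fun e => insert e S) Sᶜ := by
      intro e he e' he' hee
      simp only [Finset.coe_compl, Set.mem_compl_iff, Finset.mem_coe] at he he'
      simp only at hee
      have : e ∈ insert e' S := by rw [← hee]; exact Finset.mem_insert_self _ _
      rcases Finset.mem_insert.mp this with h | h
      · exact h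
      · exact absurd h he
    calc n - d = Sᶜ.card := by rw [Finset.card_compl, hS.1, Fintype.card_fin]
      _ = (Sᶜ.image (fun e => insert e S)).card :=
          (Finset.card_image_of_injOn (by exact_mod_cast hinj)).symm
      _ ≤ _ := Finset.card_le_card (by
          intro T hT
          rcases Finset.mem_image.mp hT with ⟨e, he, rfl⟩
          exact hmaps e he)
  · -- every big set has at most d+1 restrictions
    intro T hT
    simp only [Finset.mem_filter, Finset.mem_univ, true_and] at hT
    calc ((Finset.univ.filter _).bipartiteBelow (fun S T => S ⊆ T) T).card
        ≤ (T.powersetCard d).card := Finset.card_le_card (by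
          intro S hS
          simp only [Finset.bipartiteBelow, Finset.mem_filter, Finset.mem_univ, true_and] at hS
          rw [Finset.mem_powersetCard]
          exact ⟨hS.2, hS.1.1⟩)
      _ = (d + 1).choose d := by rw [Finset.card_powersetCard, hT.1]
      _ = d + 1 := Nat.choose_succ_self_right d

section tele
open Finset

lemma choose_pos_real {n d : ℕ} (h : d ≤ n) : (0:ℝ) < (n.choose d : ℝ) := by
  exact_mod_cast Nat.choose_pos h

lemma Acnt_div_le {n : ℕ} (x : BitString n) (u d : ℕ) (hu : 1 ≤ u) (hd : d + 1 ≤ n) :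
    (Acnt x (u-1) d : ℝ) / (n.choose d : ℝ) ≤ (Acnt x u (d+1) : ℝ) / (n.choose (d+1) : ℝ) := by
  rw [div_le_div_iff₀ (choose_pos_real (by omega)) (choose_pos_real hd)]
  have key : Acnt x (u-1) d * (n.choose (d+1)) ≤ Acnt x u (d+1) * (n.choose d) := by
    have h1 := Acnt_step x u d hu (n := n)
    have h2 : n.choose (d+1) * (d+1) = n.choose d * (n - d) := Nat.choose_succ_right_eq n d
    have h3 : Acnt x (u-1) d * (n.choose (d+1)) * (d+1) ≤ Acnt x u (d+1) * (n.choose d) * (d+1) := by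
      calc Acnt x (u-1) d * (n.choose (d+1)) * (d+1)
          = Acnt x (u-1) d * (n.choose (d+1) * (d+1)) := by ring
        _ = Acnt x (u-1) d * (n.choose d * (n - d)) := by rw [h2]
        _ = (Acnt x (u-1) d * (n - d)) * n.choose d := by ring
        _ ≤ (Acnt x u (d+1) * (d+1)) * n.choose d := Nat.mul_le_mul_right _ h1
        _ = Acnt x u (d+1) * (n.choose d) * (d+1) := by ring
    exact Nat.le_of_mul_le_mul_right h3 (by omega)
  exact_mod_cast key

lemma tele_aux {n : ℕ} (x : BitString n) (u : ℕ) (hu : 1 ≤ u)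
    (hn : zeros x + u + 1 ≤ n) :
    ∀ k d, d + k = zeros x + u + 1 →
      (Acnt x u d : ℝ) / (n.choose d : ℝ)
        ≤ ∑ e ∈ Icc d (zeros x + u), (Bcnt x u e : ℝ) / (n.choose e : ℝ) := by
  intro k
  induction k with
  | zero =>
    intro d hd
    have hdd : d = zeros x + u + 1 := by omega
    subst hdd
    rw [Acnt_top]
    simp only [Nat.cast_zero, zero_div]
    apply Finset.sum_nonneg
    intro e _
    positivity
  | succ k ih =>
    intro d hd
    have hdle : d ≤ zeros x + u := by omega
    have hsplit : (Acnt x u d : ℝ) = (Bcnt x u d : ℝ) + (Acnt x (u-1) d : ℝ) := by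
      have := Acnt_split x u d hu
      push_cast [this]
      ring
    have hIcc : Icc d (zeros x + u) = insert d (Icc (d+1) (zeros x + u)) := by
      ext e
      simp only [Finset.mem_Icc, Finset.mem_insert]
      omega
    rw [hIcc, Finset.sum_insert (by simp)]
    have h1 : (Acnt x (u-1) d : ℝ) / (n.choose d : ℝ) ≤ (Acnt x u (d+1) : ℝ) / (n.choose (d+1) : ℝ) :=
      Acnt_div_le x u d hu (by omega)
    have h2 := ih (d+1) (by omega)
    calc (Acnt x u d : ℝ) / (n.choose d : ℝ)
        = (Bcnt x u d : ℝ) / (n.choose d : ℝ) + (Acnt x (u-1) d : ℝ) / (n.choose d : ℝ) := by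
          rw [hsplit, add_div]
      _ ≤ (Bcnt x u d : ℝ) / (n.choose d : ℝ) + (Acnt x u (d+1) : ℝ) / (n.choose (d+1) : ℝ) := by
          linarith
      _ ≤ _ := by linarith

/-- Core combinatorial inequality. -/
lemma core_sum_ge_one {n : ℕ} (x : BitString n) (u : ℕ) (hz : zeros x < u)
    (hn : zeros x + u + 1 ≤ n) :
    (1:ℝ) ≤ ∑ d ∈ Icc 1 (zeros x + u), (Bcnt x u d : ℝ) / (n.choose d : ℝ) := by
  have hu : 1 ≤ u := by omega
  have h0 := tele_aux x u hu hn (zeros x + u + 1) 0 (by omega)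
  rw [Acnt_zero x u (by omega)] at h0
  simp only [Nat.choose_zero_right, Nat.cast_one, div_one] at h0
  have hB0 : Bcnt x u 0 = 0 := by
    unfold Bcnt
    rw [Finset.card_eq_zero, Finset.filter_eq_empty_iff]
    rintro S - ⟨hcard, hzz⟩
    rw [Finset.card_eq_zero] at hcard
    subst hcard
    have : flipSet x ∅ = x := by funext i; simp [flipSet]
    rw [this] at hzz
    omega
  have hIcc : Icc 0 (zeros x + u) = insert 0 (Icc 1 (zeros x + u)) := by
    ext e
    simp only [Finset.mem_Icc, Finset.mem_insert]
    omega
  rw [hIcc, Finset.sum_insert (by simp), hB0] at h0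
  simpa using h0


end tele

lemma powC_nonneg (β : ℝ) (n : ℕ) : 0 ≤ powC β n := by
  apply Finset.sum_nonneg
  intro i _
  positivity

lemma one_le_powC (β : ℝ) {n : ℕ} (hn : 1 ≤ n) : 1 ≤ powC β n := by
  have h1 : ((1:ℕ) : ℝ) ^ (-β) = 1 := by norm_num
  calc (1:ℝ) = ((1:ℕ):ℝ) ^ (-β) := h1.symm
    _ ≤ ∑ i ∈ Finset.Icc 1 n, (i : ℝ) ^ (-β) :=
        Finset.single_le_sum (f := fun i : ℕ => (i:ℝ) ^ (-β))
          (fun i _ => by positivity) (Finset.mem_Icc.mpr ⟨le_refl 1, hn⟩)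

/-- key step inequality: for `1 ≤ a`, `(β-1) * (a+1)^(-β) ≤ a^(1-β) - (a+1)^(1-β)`. -/
lemma step_ineq {β : ℝ} (hβ1 : 1 < β) (hβ2 : β < 2) {a : ℝ} (ha : 1 ≤ a) :
    (β - 1) * (a+1) ^ (-β) ≤ a ^ (1-β) - (a+1) ^ (1-β) := by
  have ha0 : (0:ℝ) < a := by linarith
  have hi0 : (0:ℝ) < a + 1 := by linarith
  -- Bernoulli : (a/(a+1))^(β-1) ≤ 1 - (β-1)/(a+1)
  have hbern : (a/(a+1)) ^ (β-1) ≤ 1 - (β-1)/(a+1) := by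
    have hs : -1 ≤ -(1/(a+1)) := by
      rw [neg_le_neg_iff]
      rw [div_le_one hi0]
      linarith
    have := rpow_one_add_le_one_add_mul_self (s := -(1/(a+1))) hs (p := β - 1)
      (by linarith) (by linarith)
    have heq : 1 + -(1/(a+1)) = a/(a+1) := by field_simp; ring
    rw [heq] at this
    calc (a/(a+1)) ^ (β-1) ≤ 1 + (β-1) * -(1/(a+1)) := this
      _ = 1 - (β-1)/(a+1) := by ring
  -- rewrite RHS
  have hsplit : a ^ (1-β) - (a+1) ^ (1-β) = a ^ (1-β) * (1 - (a/(a+1)) ^ (β-1)) := by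
    have h1 : a ^ (1-β) * (a/(a+1)) ^ (β-1) = (a+1) ^ (1-β) := by
      rw [Real.div_rpow ha0.le hi0.le, div_eq_mul_inv, ← Real.rpow_neg hi0.le, ← mul_assoc,
        ← Real.rpow_add ha0]
      rw [show (1-β) + (β-1) = 0 by ring, Real.rpow_zero, one_mul]
      congr 1
      ring
    rw [mul_sub, mul_one, h1]
  rw [hsplit]
  have h2 : (β-1)/(a+1) ≤ 1 - (a/(a+1)) ^ (β-1) := by linarith
  have h3 : a ^ (1-β) * ((β-1)/(a+1)) ≤ a ^ (1-β) * (1 - (a/(a+1)) ^ (β-1)) := by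
    apply mul_le_mul_of_nonneg_left h2 (by positivity)
  refine le_trans ?_ h3
  -- (β-1)(a+1)^(-β) ≤ a^(1-β) (β-1)/(a+1)
  rw [div_eq_mul_inv, ← mul_assoc, mul_comm (a ^ (1-β)) (β-1), mul_assoc]
  apply mul_le_mul_of_nonneg_left _ (by linarith : (0:ℝ) ≤ β - 1)
  -- (a+1)^(-β) ≤ a^(1-β) * (a+1)⁻¹
  have h4 : (a+1) ^ (-β) = (a+1) ^ (1-β) * (a+1)⁻¹ := by
    rw [← Real.rpow_neg_one (a+1), ← Real.rpow_add hi0]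
    congr 1; ring
  rw [h4]
  apply mul_le_mul_of_nonneg_right _ (by positivity)
  exact Real.rpow_le_rpow_of_nonpos ha0 (by linarith) (by linarith)

lemma powC_le {β : ℝ} (hβ1 : 1 < β) (hβ2 : β < 2) (n : ℕ) : powC β n ≤ β / (β - 1) := by
  have key : ∀ m : ℕ, 1 ≤ m → ∑ i ∈ Finset.Icc 2 m, (i:ℝ) ^ (-β)
      ≤ (1 - (m:ℝ) ^ (1-β)) / (β - 1) := by
    intro m hm
    induction m with
    | zero => omega
    | succ m ih =>
      rcases Nat.eq_or_lt_of_le hm with h1 | h1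
      · -- m + 1 = 1
        have : m = 0 := by omega
        subst this
        norm_num
      · have hm1 : 1 ≤ m := by omega
        have ihm := ih hm1
        rw [Finset.sum_Icc_succ_top (by omega : 2 ≤ m + 1)]
        have hstep := step_ineq hβ1 hβ2 (a := (m:ℝ)) (by exact_mod_cast hm1)
        have hcast : ((m:ℝ) + 1) = ((m+1 : ℕ) : ℝ) := by push_cast; ring
        rw [hcast] at hstep
        have hβpos : (0:ℝ) < β - 1 := by linarith
        rw [le_div_iff₀ hβpos]
        have ihm' : (∑ i ∈ Finset.Icc 2 m, (i:ℝ) ^ (-β)) * (β-1) ≤ 1 - (m:ℝ) ^ (1-β) :=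
          (le_div_iff₀ hβpos).mp ihm
        nlinarith [hstep, ihm']
  unfold powC
  rcases Nat.lt_or_ge n 1 with h | h
  · interval_cases n
    · rw [show Finset.Icc 1 0 = ∅ from rfl, Finset.sum_empty]
      have hβpos : (0:ℝ) < β - 1 := by linarith
      positivity
  · have hsplit : Finset.Icc 1 n = insert 1 (Finset.Icc 2 n) := by
      ext i
      simp only [Finset.mem_Icc, Finset.mem_insert]
      omega
    rw [hsplit, Finset.sum_insert (by simp)]
    have h2 := key n h
    have hm : (0:ℝ) ≤ (n:ℝ) ^ (1-β) := by positivity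
    have hβpos : (0:ℝ) < β - 1 := by linarith
    have : (1 - (n:ℝ) ^ (1-β)) / (β - 1) ≤ 1 / (β-1) := by
      gcongr <;> linarith
    norm_num
    calc (1:ℝ) + ∑ i ∈ Finset.Icc 2 n, (i:ℝ) ^ (-β) ≤ 1 + 1/(β-1) := by linarith
      _ = β / (β-1) := by field_simp; ring

lemma foldl_joint {α : Type*} [Inhabited α] {m : ℕ} (μ : Fin m → PMF α) (d : Fin m → α) :
    ∀ (l : List (Fin m)), l.Nodup → ∀ g : Fin m → α,
      (l.foldl (fun p i => p.bind fun h => (μ i).map fun y => Function.update h i y)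
        (PMF.pure d)) g
      = if ∀ j, j ∉ l → g j = d j then (l.map (fun j => μ j (g j))).prod else 0 := by
  intro l
  induction l using List.reverseRecOn with
  | nil =>
    intro _ g
    simp only [List.foldl_nil, PMF.pure_apply, List.map_nil, List.prod_nil, List.not_mem_nil,
      not_false_eq_true, forall_true_left]
    by_cases hgd : g = d
    · rw [if_pos hgd, if_pos (by subst hgd; intro j; rfl)]
    · rw [if_neg hgd, if_neg (fun h => hgd (funext h))]
  | append_singleton l i ih =>
    intro hnd g
    have hl : l.Nodup := (List.nodup_append'.mp hnd).1
    have hil : i ∉ l := by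
      have := (List.nodup_append'.mp hnd).2.2
      intro hmem
      exact this hmem (List.mem_singleton_self i)
    rw [List.foldl_append]
    simp only [List.foldl_cons, List.foldl_nil]
    rw [PMF.bind_apply]
    -- inner map evaluation
    have hmap : ∀ h : Fin m → α,
        ((μ i).map fun y => Function.update h i y) g
        = if ∀ j, j ≠ i → g j = h j then μ i (g i) else 0 := by
      intro h
      rw [PMF.map_apply]
      rw [tsum_eq_single (g i) ?_]
      · have hiff : (g = Function.update h i (g i)) ↔ (∀ j, j ≠ i → g j = h j) := by
          constructor
          · intro hg j hj
            rw [hg]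
            simp [Function.update, hj]
          · intro hj
            funext j
            by_cases hji : j = i
            · subst hji; simp [Function.update]
            · rw [hj j hji]; simp [Function.update, hji]
        simp only [hiff]
      · intro y hy
        rw [if_neg]
        intro hg
        exact hy (by rw [hg]; simp [Function.update])
    classical
    set h₀ : Fin m → α := Function.update g i (d i) with hh₀
    rw [tsum_eq_single h₀ ?_]
    · -- main term
      have hcond : (∀ j, j ≠ i → g j = h₀ j) := by
        intro j hj; simp [hh₀, Function.update, hj]
      rw [hmap h₀, if_pos hcond, ih hl h₀]
      by_cases hg : ∀ j, j ∉ l ++ [i] → g j = d j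
      · rw [if_pos hg, if_pos ?_]
        · rw [List.map_append, List.prod_append]
          simp only [List.map_cons, List.map_nil, List.prod_cons, List.prod_nil, mul_one]
          congr 1
          congr 1
          apply List.map_congr_left
          intro j hj
          have hji : j ≠ i := fun hc => hil (hc ▸ hj)
          simp [hh₀, Function.update, hji]
        · intro j hjl
          by_cases hji : j = i
          · subst hji; simp [hh₀, Function.update]
          · have : j ∉ l ++ [i] := by
              simp only [List.mem_append, List.mem_singleton]
              push_neg
              exact ⟨hjl, hji⟩
            rw [show h₀ j = g j by simp [hh₀, Function.update, hji]]
            exact hg j this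
      · rw [if_neg hg, if_neg ?_, zero_mul]
        intro hcon
        apply hg
        intro j hj
        simp only [List.mem_append, List.mem_singleton] at hj
        push_neg at hj
        have := hcon j hj.1
        rw [show h₀ j = g j by simp [hh₀, Function.update, hj.2]] at this
        exact this
    · -- other terms vanish
      intro h hne
      rw [hmap h]
      by_cases hcond : ∀ j, j ≠ i → g j = h j
      · rw [if_pos hcond]
        by_cases hdi : h i = d i
        · exfalso
          apply hne
          funext j
          by_cases hji : j = i
          · subst hji; simp [hh₀, Function.update, hdi]
          · rw [← hcond j hji]; simp [hh₀, Function.update, hji]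
        · rw [ih hl h, if_neg, zero_mul]
          intro hall
          exact hdi (hall i hil)
      · rw [if_neg hcond, mul_zero]

lemma jointPMF_apply {α : Type*} [Inhabited α] {m : ℕ} (μ : Fin m → PMF α) (g : Fin m → α) :
    jointPMF μ g = ∏ j, μ j (g j) := by
  unfold jointPMF
  rw [foldl_joint μ _ (List.finRange m) (List.nodup_finRange m) g]
  rw [if_pos (fun j hj => absurd (List.mem_finRange j) hj)]
  rw [Fin.prod_univ_def]


/-- Per-coordinate lower bound. -/
lemma percoord {n : ℕ} {β : ℝ} (hβ1 : 1 < β) (hβ2 : β < 2)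
    (mo : BitString n → PMF (BitString n)) (hmut : IsPowerLawMutation n β mo)
    (x : BitString n) (u : ℕ) (hz : zeros x < u) (hun : 2*u + 2 ≤ n) :
    ENNReal.ofReal ((2*(u:ℝ)) ^ (-β) * ((β-1)/β))
      ≤ ∑ y ∈ Finset.univ.filter (fun y : BitString n => zeros y = u), mo x y := by
  classical
  set m := zeros x + u with hmdef
  have hu : 1 ≤ u := by omega
  have hm1 : 1 ≤ m := by omega
  have hmn : m + 1 ≤ n := by omega
  set T := Finset.univ.filter
    (fun y : BitString n => zeros y = u ∧ 1 ≤ hamming x y ∧ hamming x y ≤ m) with hT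
  have hsubset : T ⊆ Finset.univ.filter (fun y : BitString n => zeros y = u) := by
    intro y hy
    simp only [hT, Finset.mem_filter, Finset.mem_univ, true_and] at hy ⊢
    exact hy.1
  have hfiber : ∀ d ∈ Finset.Icc 1 m,
      T.filter (fun y => hamming x y = d)
        = Finset.univ.filter (fun y : BitString n => zeros y = u ∧ hamming x y = d) := by
    intro d hd
    rw [Finset.mem_Icc] at hd
    rw [hT, Finset.filter_filter]
    congr 1
    ext y
    constructor
    · rintro ⟨h1, _⟩; exact ⟨h1.1, by assumption⟩
    · rintro ⟨h1, h2⟩; exact ⟨⟨h1, by omega⟩, h2⟩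
  have hval : ∀ d ∈ Finset.Icc 1 m, ∀ y ∈ T.filter (fun y => hamming x y = d),
      mo x y = ENNReal.ofReal ((d:ℝ) ^ (-β) / powC β n / (n.choose d : ℝ)) := by
    intro d hd y hy
    rw [Finset.mem_Icc] at hd
    rw [Finset.mem_filter] at hy
    rw [hmut x y, hy.2, if_neg (by omega)]
  have hC0 : (0:ℝ) < powC β n := lt_of_lt_of_le one_pos (one_le_powC β (by omega))
  have hCle : powC β n ≤ β / (β-1) := powC_le hβ1 hβ2 n
  have hcore : (1:ℝ) ≤ ∑ d ∈ Finset.Icc 1 m, (Bcnt x u d : ℝ) / (n.choose d : ℝ) :=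
    core_sum_ge_one x u hz (by omega)
  -- the real-valued term bound
  have hβ0 : (0:ℝ) < β := by linarith
  have key : (2*(u:ℝ)) ^ (-β) * ((β-1)/β)
      ≤ ∑ d ∈ Finset.Icc 1 m,
          (Bcnt x u d : ℝ) * ((d:ℝ) ^ (-β) / powC β n / (n.choose d : ℝ)) := by
    have h2u : (2*(u:ℝ)) ^ (-β) ≤ (m:ℝ) ^ (-β) := by
      apply Real.rpow_le_rpow_of_nonpos
      · exact_mod_cast hm1
      · have : m ≤ 2*u := by omega
        push_cast
        exact_mod_cast (by push_cast; exact_mod_cast this : (m:ℝ) ≤ 2*(u:ℝ))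
      · linarith
    have hfrac : (β-1)/β ≤ 1 / powC β n := by
      rw [div_le_div_iff₀ hβ0 hC0]
      have h := mul_le_mul_of_nonneg_left hCle (by linarith : (0:ℝ) ≤ β - 1)
      have heq : (β-1) * (β/(β-1)) = β := by
        rw [mul_comm]; exact div_mul_cancel₀ β (by linarith)
      linarith
    have hstep1 : (2*(u:ℝ)) ^ (-β) * ((β-1)/β) ≤ (m:ℝ) ^ (-β) * (1 / powC β n) := by
      apply mul_le_mul h2u hfrac (div_nonneg (by linarith) (by linarith)) (by positivity)
    have hstep2 : (m:ℝ) ^ (-β) * (1 / powC β n)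
        ≤ (∑ d ∈ Finset.Icc 1 m, (Bcnt x u d : ℝ) / (n.choose d : ℝ))
            * ((m:ℝ) ^ (-β) * (1 / powC β n)) := by
      apply le_mul_of_one_le_left
        (mul_nonneg (Real.rpow_nonneg (by positivity) _) (one_div_nonneg.mpr hC0.le)) hcore
    have hstep3 : (∑ d ∈ Finset.Icc 1 m, (Bcnt x u d : ℝ) / (n.choose d : ℝ))
            * ((m:ℝ) ^ (-β) * (1 / powC β n))
        ≤ ∑ d ∈ Finset.Icc 1 m,
            (Bcnt x u d : ℝ) * ((d:ℝ) ^ (-β) / powC β n / (n.choose d : ℝ)) := by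
      rw [Finset.sum_mul]
      apply Finset.sum_le_sum
      intro d hd
      rw [Finset.mem_Icc] at hd
      have hdm : (d:ℝ) ^ (-β) ≥ (m:ℝ) ^ (-β) := by
        apply Real.rpow_le_rpow_of_nonpos
        · exact_mod_cast hd.1
        · exact_mod_cast hd.2
        · linarith
      have hrw : (Bcnt x u d : ℝ) * ((d:ℝ) ^ (-β) / powC β n / (n.choose d : ℝ))
          = (Bcnt x u d : ℝ) / (n.choose d : ℝ) * ((d:ℝ) ^ (-β) * (1 / powC β n)) := by
        ring
      rw [hrw]
      apply mul_le_mul_of_nonneg_left _ (by positivity)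
      apply mul_le_mul_of_nonneg_right hdm (one_div_nonneg.mpr hC0.le)
    linarith
  -- lift to ENNReal
  have hvnonneg : ∀ d ∈ Finset.Icc 1 m,
      (0:ℝ) ≤ (Bcnt x u d : ℝ) * ((d:ℝ) ^ (-β) / powC β n / (n.choose d : ℝ)) := by
    intro d _
    have h1 : (0:ℝ) ≤ (d:ℝ) ^ (-β) / powC β n / (n.choose d : ℝ) :=
      div_nonneg (div_nonneg (Real.rpow_nonneg (by positivity) _) hC0.le) (Nat.cast_nonneg _)
    exact mul_nonneg (Nat.cast_nonneg _) h1
  calc ENNReal.ofReal ((2*(u:ℝ)) ^ (-β) * ((β-1)/β))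
      ≤ ENNReal.ofReal (∑ d ∈ Finset.Icc 1 m,
          (Bcnt x u d : ℝ) * ((d:ℝ) ^ (-β) / powC β n / (n.choose d : ℝ))) :=
        ENNReal.ofReal_le_ofReal key
    _ = ∑ d ∈ Finset.Icc 1 m, ENNReal.ofReal
          ((Bcnt x u d : ℝ) * ((d:ℝ) ^ (-β) / powC β n / (n.choose d : ℝ))) :=
        ENNReal.ofReal_sum_of_nonneg hvnonneg
    _ = ∑ d ∈ Finset.Icc 1 m, ∑ y ∈ T.filter (fun y => hamming x y = d), mo x y := ?heq
    _ = ∑ y ∈ T, mo x y := Finset.sum_fiberwise_of_maps_to ?maps _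
    _ ≤ _ := Finset.sum_le_sum_of_subset hsubset
  case maps =>
    intro y hy
    simp only [hT, Finset.mem_filter, Finset.mem_univ, true_and] at hy
    rw [Finset.mem_Icc]
    exact ⟨hy.2.1, hy.2.2⟩
  case heq =>
    apply Finset.sum_congr rfl
    intro d hd
    rw [Finset.sum_congr rfl (hval d hd), Finset.sum_const]
    have hcard : (T.filter (fun y => hamming x y = d)).card = Bcnt x u d := by
      rw [hfiber d hd]
      rw [card_y_eq_card_S]
      rfl
    rw [hcard, nsmul_eq_mul, ENNReal.ofReal_mul (by positivity), ENNReal.ofReal_natCast]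

/-- Final real arithmetic. -/
lemma real_final {β : ℝ} (hβ1 : 1 < β) (hβ2 : β < 2) (n N u K q : ℕ)
    (hn : 2 ≤ n) (hN : 1 ≤ N) (hNn : N ≤ n) (hu : 1 ≤ u) (hun : 2*u + 2 ≤ n)
    (hq : N * q = n) (hK : u ≤ K * q) :
    (2:ℝ)^(-β) * ((β-1)/β) / 2 * N * (n:ℝ)^(-β) + (1 - (2*(u:ℝ))^(-β) * ((β-1)/β))^K ≤ 1 := by
  have hβ0 : (0:ℝ) < β := by linarith
  have hq1 : 1 ≤ q := by
    rcases Nat.eq_zero_or_pos q with h | h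
    · rw [h, Nat.mul_zero] at hq; omega
    · exact h
  set p : ℝ := (2*(u:ℝ))^(-β) * ((β-1)/β) with hpdef
  have hu0 : (0:ℝ) < (u:ℝ) := by exact_mod_cast hu
  have h2u0 : (0:ℝ) < 2*(u:ℝ) := by linarith
  have hu1 : (1:ℝ) ≤ (u:ℝ) := by exact_mod_cast hu
  have hfb : (0:ℝ) ≤ (β-1)/β := div_nonneg (by linarith) (by linarith)
  have hp0 : 0 < p :=
    mul_pos (Real.rpow_pos_of_pos h2u0 _) (div_pos (by linarith) hβ0)
  have hp1 : p ≤ 1 := by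
    have h1 : (2*(u:ℝ))^(-β) ≤ 1 :=
      Real.rpow_le_one_of_one_le_of_nonpos (by linarith) (by linarith)
    have h2 : (β-1)/β ≤ 1 := by
      rw [div_le_one hβ0]; linarith
    calc p ≤ 1 * ((β-1)/β) := mul_le_mul_of_nonneg_right h1 hfb
      _ ≤ 1 := by linarith
  have hQ0 : (0:ℝ) ≤ (1-p)^K := pow_nonneg (by linarith) _
  have hQ1 : (1-p)^K ≤ 1 := pow_le_one₀ (by linarith) (by linarith)
  have hbern : 1 + (K:ℝ)*p ≤ (1+p)^K := one_add_mul_le_pow (by linarith) K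
  have hQb : (1-p)^K * (1 + (K:ℝ)*p) ≤ 1 := by
    calc (1-p)^K * (1 + (K:ℝ)*p) ≤ (1-p)^K * (1+p)^K :=
          mul_le_mul_of_nonneg_left hbern hQ0
      _ = (1-p^2)^K := by rw [← mul_pow]; congr 1; ring
      _ ≤ 1 := pow_le_one₀ (by nlinarith) (by nlinarith)
  -- 2 * T ≤ K * p
  have hNn' : (0:ℝ) < (n:ℝ) := by exact_mod_cast (by omega : 0 < n)
  have hq0 : (0:ℝ) < (q:ℝ) := by exact_mod_cast hq1
  have hsplit2u : (2*(u:ℝ))^(-β) = (2:ℝ)^(-β) * (u:ℝ)^(-β) :=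
    Real.mul_rpow (by norm_num) hu0.le
  have hu1β : (u:ℝ)^(1-β) = (u:ℝ) * (u:ℝ)^(-β) := by
    rw [show (1-β) = 1 + (-β) by ring, Real.rpow_add hu0, Real.rpow_one]
  have hn1β : (n:ℝ)^(1-β) = (n:ℝ) * (n:ℝ)^(-β) := by
    rw [show (1-β) = 1 + (-β) by ring, Real.rpow_add hNn', Real.rpow_one]
  have hule : (u:ℝ) ≤ (n:ℝ) := by exact_mod_cast (by omega : u ≤ n)
  have hnu : (n:ℝ)^(1-β) ≤ (u:ℝ)^(1-β) :=
    Real.rpow_le_rpow_of_nonpos hu0 hule (by linarith)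
  have hKq : (u:ℝ) ≤ (K:ℝ)*(q:ℝ) := by exact_mod_cast hK
  have hNq : (N:ℝ)*(q:ℝ) = (n:ℝ) := by exact_mod_cast hq
  have hmain : (N:ℝ) * (n:ℝ)^(-β) ≤ (K:ℝ) * (u:ℝ)^(-β) := by
    have hub : (0:ℝ) ≤ (u:ℝ)^(-β) := Real.rpow_nonneg hu0.le _
    have h1 : (u:ℝ) * (u:ℝ)^(-β) ≤ (K:ℝ)*(q:ℝ) * (u:ℝ)^(-β) :=
      mul_le_mul_of_nonneg_right hKq hub
    have h2 : (N:ℝ)*(q:ℝ) * (n:ℝ)^(-β) ≤ (K:ℝ)*(q:ℝ) * (u:ℝ)^(-β) := by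
      calc (N:ℝ)*(q:ℝ) * (n:ℝ)^(-β) = (n:ℝ) * (n:ℝ)^(-β) := by rw [hNq]
        _ = (n:ℝ)^(1-β) := hn1β.symm
        _ ≤ (u:ℝ)^(1-β) := hnu
        _ = (u:ℝ) * (u:ℝ)^(-β) := hu1β
        _ ≤ (K:ℝ)*(q:ℝ) * (u:ℝ)^(-β) := h1
    have h3 : (N:ℝ) * (n:ℝ)^(-β) * (q:ℝ) ≤ (K:ℝ) * (u:ℝ)^(-β) * (q:ℝ) := by
      calc (N:ℝ) * (n:ℝ)^(-β) * (q:ℝ) = (N:ℝ)*(q:ℝ) * (n:ℝ)^(-β) := by ring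
        _ ≤ (K:ℝ)*(q:ℝ) * (u:ℝ)^(-β) := h2
        _ = (K:ℝ) * (u:ℝ)^(-β) * (q:ℝ) := by ring
    exact le_of_mul_le_mul_right h3 hq0
  have hT2 : 2 * ((2:ℝ)^(-β) * ((β-1)/β) / 2 * N * (n:ℝ)^(-β)) ≤ (K:ℝ) * p := by
    have h2b : (0:ℝ) ≤ (2:ℝ)^(-β) := Real.rpow_nonneg (by norm_num) _
    calc 2 * ((2:ℝ)^(-β) * ((β-1)/β) / 2 * N * (n:ℝ)^(-β))
        = ((N:ℝ) * (n:ℝ)^(-β)) * ((2:ℝ)^(-β) * ((β-1)/β)) := by ring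
      _ ≤ ((K:ℝ) * (u:ℝ)^(-β)) * ((2:ℝ)^(-β) * ((β-1)/β)) := by
          apply mul_le_mul_of_nonneg_right hmain (mul_nonneg h2b hfb)
      _ = (K:ℝ) * p := by rw [hpdef, hsplit2u]; ring
  rcases le_or_gt ((K:ℝ)*p) 1 with hKp | hKp
  · have e2 : (0:ℝ) ≤ (1 - (1-p)^K) * (1 - (K:ℝ)*p) :=
      mul_nonneg (by linarith) (by linarith)
    linarith [hQb, e2, hT2]
  · have e3 : (0:ℝ) ≤ (1-p)^K * ((K:ℝ)*p - 1) := mul_nonneg hQ0 (by linarith)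
    have hQhalf : 2*(1-p)^K ≤ 1 := by linarith [hQb, e3]
    have hc2 : (2:ℝ)^(-β) ≤ 1/2 := by
      have : (2:ℝ)^(-β) ≤ (2:ℝ)^(-1:ℝ) :=
        Real.rpow_le_rpow_of_exponent_le (by norm_num) (by linarith)
      rwa [Real.rpow_neg_one, show ((2:ℝ))⁻¹ = 1/2 by norm_num] at this
    have hNnb : (N:ℝ) * (n:ℝ)^(-β) ≤ 1 := by
      have h1 : (n:ℝ)^(-β) ≤ (n:ℝ)^(-1:ℝ) :=
        Real.rpow_le_rpow_of_exponent_le (by exact_mod_cast (by omega : 1 ≤ n)) (by linarith)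
      have h2 : (N:ℝ) ≤ (n:ℝ) := by exact_mod_cast hNn
      have h3 : (n:ℝ)^(-1:ℝ) = ((n:ℝ))⁻¹ := Real.rpow_neg_one _
      calc (N:ℝ) * (n:ℝ)^(-β) ≤ (n:ℝ) * (n:ℝ)^(-1:ℝ) := by
            apply mul_le_mul h2 h1 (Real.rpow_nonneg hNn'.le _) hNn'.le
        _ = 1 := by rw [h3]; field_simp
    have hfb1 : (β-1)/β ≤ 1 := by rw [div_le_one hβ0]; linarith
    have hT : (2:ℝ)^(-β) * ((β-1)/β) / 2 * N * (n:ℝ)^(-β) ≤ 1/2 := by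
      have h2b : (0:ℝ) ≤ (2:ℝ)^(-β) := Real.rpow_nonneg (by norm_num) _
      have hc' : (2:ℝ)^(-β) * ((β-1)/β) ≤ 1/2 := by
        calc (2:ℝ)^(-β) * ((β-1)/β) ≤ (1/2) * 1 := mul_le_mul hc2 hfb1 hfb (by norm_num)
          _ = 1/2 := by norm_num
      have hc : (2:ℝ)^(-β) * ((β-1)/β) / 2 ≤ 1/4 := by linarith
      have hcnn : (0:ℝ) ≤ (2:ℝ)^(-β) * ((β-1)/β) / 2 :=
        div_nonneg (mul_nonneg h2b hfb) (by norm_num)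
      calc (2:ℝ)^(-β) * ((β-1)/β) / 2 * N * (n:ℝ)^(-β)
          = ((2:ℝ)^(-β) * ((β-1)/β) / 2) * ((N:ℝ) * (n:ℝ)^(-β)) := by ring
        _ ≤ (1/4) * 1 := by
            apply mul_le_mul hc hNnb (mul_nonneg (Nat.cast_nonneg N)
              (Real.rpow_nonneg hNn'.le _)) (by norm_num)
        _ ≤ 1/2 := by norm_num
    linarith

/-- If `x_0, …, x_N` satisfy `|x_j|₀ = j·n/N` and `y_0, …, y_N` are obtained
by independent power-law mutations (exponent `β ∈ (1,2)`) of `x_0, …, x_N`, then for every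
integer `u` with `1 ≤ u ≤ n/2 − 1`, the probability that some `y_j` has exactly `u` zeros
is at least `c·N·n^{−β}`, with `c > 0` depending only on `β`. -/
theorem power_law_iteration_hits_u :
    ∀ β : ℝ, 1 < β → β < 2 →
      ∃ c : ℝ, 0 < c ∧
        ∀ n N : ℕ, 2 ≤ n → 1 ≤ N → N ≤ n → N ∣ n →
          ∀ mutOp : BitString n → PMF (BitString n), IsPowerLawMutation n β mutOp →
            ∀ x : Fin (N + 1) → BitString n,
              (∀ j : Fin (N + 1), zeros (x j) = (j : ℕ) * (n / N)) →
              ∀ u : ℕ, 1 ≤ u → (u : ℝ) ≤ (n : ℝ) / 2 - 1 →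
                ENNReal.ofReal (c * N * (n : ℝ) ^ (-β))
                  ≤ (jointPMF fun j => mutOp (x j)).toOuterMeasure
                      {y | ∃ j : Fin (N + 1), zeros (y j) = u} := by
  intro β hβ1 hβ2
  have hβ0 : (0:ℝ) < β := by linarith
  refine ⟨(2:ℝ)^(-β) * ((β-1)/β) / 2,
    div_pos (mul_pos (Real.rpow_pos_of_pos two_pos _) (div_pos (by linarith) hβ0))
      (by norm_num), ?_⟩
  intro n N hn hN hNn hdvd mutOp hmut x hx u hu huhalf
  classical
  set q := n / N with hqdef
  have hq : N * q = n := Nat.mul_div_cancel' hdvd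
  have hun : 2*u + 2 ≤ n := by
    have : ((2*u + 2 : ℕ) : ℝ) ≤ (n:ℝ) := by push_cast; linarith
    exact_mod_cast this
  have hq1 : 1 ≤ q := by
    rcases Nat.eq_zero_or_pos q with h | h
    · rw [h, Nat.mul_zero] at hq; omega
    · exact h
  set G := Finset.univ.filter (fun j : Fin (N+1) => zeros (x j) < u) with hG
  set K := G.card with hKdef
  have hK : u ≤ K * q := by
    by_contra hcon
    push_neg at hcon
    have hKN : K < N := by
      have h1 : K * q < u := hcon
      have h2 : 2*u ≤ N * q := by omega
      by_contra hKN'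
      push_neg at hKN'
      have : N * q ≤ K * q := Nat.mul_le_mul_right q hKN'
      omega
    have hsub : (Finset.univ : Finset (Fin (K+1))).image
        (Fin.castLE (by omega : K + 1 ≤ N + 1)) ⊆ G := by
      intro j hj
      rcases Finset.mem_image.mp hj with ⟨i, _, rfl⟩
      simp only [hG, Finset.mem_filter, Finset.mem_univ, true_and]
      rw [hx]
      have hi : (i : ℕ) ≤ K := by omega
      calc ((Fin.castLE _ i : Fin (N+1)) : ℕ) * q = (i : ℕ) * q := rfl
        _ ≤ K * q := Nat.mul_le_mul_right q hi
        _ < u := hcon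
    have hcard : K + 1 ≤ K := by
      calc K + 1 = ((Finset.univ : Finset (Fin (K+1))).image
            (Fin.castLE (by omega : K + 1 ≤ N + 1))).card := by
            rw [Finset.card_image_of_injective _ (Fin.castLE_injective _)]
            simp
        _ ≤ G.card := Finset.card_le_card hsub
        _ = K := rfl
    omega
  have hK1 : 1 ≤ K := by
    by_contra h
    push_neg at h
    interval_cases K
    omega
  -- notation
  set μ : Fin (N+1) → PMF (BitString n) := fun j => mutOp (x j) with hμ
  set pstar : ℝ := (2*(u:ℝ))^(-β) * ((β-1)/β) with hpstar
  have hfb : (0:ℝ) ≤ (β-1)/β := div_nonneg (by linarith) (by linarith)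
  have hpstar0 : 0 ≤ pstar := by
    rw [hpstar]
    exact mul_nonneg (Real.rpow_nonneg (by positivity) _) hfb
  have hpstar1 : pstar ≤ 1 := by
    have hu0 : (1:ℝ) ≤ 2*(u:ℝ) := by
      have : (1:ℝ) ≤ (u:ℝ) := by exact_mod_cast hu
      linarith
    have h1 : (2*(u:ℝ))^(-β) ≤ 1 :=
      Real.rpow_le_one_of_one_le_of_nonpos hu0 (by linarith)
    have h2 : (β-1)/β ≤ 1 := by rw [div_le_one hβ0]; linarith
    calc pstar ≤ 1 * ((β-1)/β) := mul_le_mul_of_nonneg_right h1 hfb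
      _ ≤ 1 := by linarith
  -- per-coordinate sums
  set pj : Fin (N+1) → ℝ≥0∞ :=
    fun j => ∑ y ∈ Finset.univ.filter (fun y : BitString n => zeros y = u), μ j y with hpj
  set sj : Fin (N+1) → ℝ≥0∞ :=
    fun j => ∑ y ∈ Finset.univ.filter (fun y : BitString n => ¬ zeros y = u), μ j y with hsj
  have hps : ∀ j, pj j + sj j = 1 := by
    intro j
    have h1 := Finset.sum_filter_add_sum_filter_not Finset.univ
      (fun y : BitString n => zeros y = u) (fun y => μ j y)
    have h2 : ∑ y : BitString n, μ j y = 1 := by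
      have := (μ j).tsum_coe
      rwa [tsum_fintype] at this
    rw [hpj, hsj]
    simp only
    rw [h1, h2]
  have hsj_le_one : ∀ j, sj j ≤ 1 := by
    intro j
    rw [← hps j]
    exact le_add_self
  have hpj_ne_top : ∀ j, pj j ≠ ⊤ := by
    intro j
    have : pj j ≤ 1 := by rw [← hps j]; exact le_self_add
    exact (this.trans_lt (by norm_num)).ne
  have hsjG : ∀ j ∈ G, sj j ≤ 1 - ENNReal.ofReal pstar := by
    intro j hj
    simp only [hG, Finset.mem_filter, Finset.mem_univ, true_and] at hj
    have hper : ENNReal.ofReal pstar ≤ pj j := percoord hβ1 hβ2 mutOp hmut (x j) u hj hun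
    have hsub : sj j = 1 - pj j := by
      apply ENNReal.eq_sub_of_add_eq (hpj_ne_top j)
      rw [add_comm]
      exact hps j
    rw [hsub]
    exact tsub_le_tsub_left hper 1
  -- joint measure computation
  rw [PMF.toOuterMeasure_apply, tsum_fintype]
  have hind : ∀ g : Fin (N+1) → BitString n,
      Set.indicator {y | ∃ j : Fin (N + 1), zeros (y j) = u}
        (fun y => (jointPMF fun j => mutOp (x j)) y) g
      = if (∃ j : Fin (N+1), zeros (g j) = u) then (jointPMF μ) g else 0 := by
    intro g
    rw [Set.indicator_apply]
    congr 1
  have hsum_ind : ∑ g : Fin (N+1) → BitString n,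
      Set.indicator {y | ∃ j : Fin (N + 1), zeros (y j) = u}
        (fun y => (jointPMF fun j => mutOp (x j)) y) g
      = ∑ g ∈ Finset.univ.filter
          (fun g : Fin (N+1) → BitString n => ∃ j : Fin (N+1), zeros (g j) = u),
          (jointPMF μ) g := by
    rw [Finset.sum_congr rfl (fun g _ => hind g), Finset.sum_filter]
  rw [hsum_ind]
  set E := Finset.univ.filter
    (fun g : Fin (N+1) → BitString n => ∃ j : Fin (N+1), zeros (g j) = u) with hE
  set Ec := Finset.univ.filter
    (fun g : Fin (N+1) → BitString n => ¬ ∃ j : Fin (N+1), zeros (g j) = u) with hEc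
  have htot : ∑ g ∈ E, (jointPMF μ) g + ∑ g ∈ Ec, (jointPMF μ) g = 1 := by
    rw [hE, hEc, Finset.sum_filter_add_sum_filter_not]
    have := (jointPMF μ).tsum_coe
    rwa [tsum_fintype] at this
  have hEcval : ∑ g ∈ Ec, (jointPMF μ) g = ∏ j, sj j := by
    have hpi : Ec = Fintype.piFinset
        (fun _ : Fin (N+1) => Finset.univ.filter (fun y : BitString n => ¬ zeros y = u)) := by
      ext g
      simp only [hEc, Finset.mem_filter, Finset.mem_univ, true_and, Fintype.mem_piFinset,
        not_exists]
    rw [hpi, Finset.sum_congr rfl (fun g _ => jointPMF_apply μ g)]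
    rw [← Finset.prod_univ_sum]
  have hprod_le : ∏ j, sj j ≤ (1 - ENNReal.ofReal pstar)^K := by
    have h1 : ∏ j, sj j ≤ ∏ j, (if j ∈ G then (1 - ENNReal.ofReal pstar) else 1) := by
      apply Finset.prod_le_prod'
      intro j _
      by_cases hj : j ∈ G
      · rw [if_pos hj]; exact hsjG j hj
      · rw [if_neg hj]; exact hsj_le_one j
    have h2 : ∏ j, (if j ∈ G then (1 - ENNReal.ofReal pstar) else (1:ℝ≥0∞))
        = (1 - ENNReal.ofReal pstar)^K := by
      rw [Finset.prod_ite_mem, Finset.univ_inter, Finset.prod_const, hKdef]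
    rw [h2] at h1
    exact h1
  have hQ : (1 - ENNReal.ofReal pstar)^K = ENNReal.ofReal ((1 - pstar)^K) := by
    rw [ENNReal.ofReal_pow (by linarith), ENNReal.ofReal_sub _ hpstar0, ENNReal.ofReal_one]
  have hreal := real_final hβ1 hβ2 n N u K q hn hN hNn hu hun hq hK
  have hEc_le : ∑ g ∈ Ec, (jointPMF μ) g ≤ ENNReal.ofReal ((1 - pstar)^K) := by
    rw [hEcval, ← hQ]
    exact hprod_le
  have hEc_ne_top : ∑ g ∈ Ec, (jointPMF μ) g ≠ ⊤ := by
    have : ∑ g ∈ Ec, (jointPMF μ) g ≤ 1 := by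
      rw [← htot]; exact le_add_self
    exact (this.trans_lt (by norm_num)).ne
  have hlast : (1:ℝ≥0∞) - ∑ g ∈ Ec, (jointPMF μ) g = ∑ g ∈ E, (jointPMF μ) g :=
    ENNReal.sub_eq_of_eq_add hEc_ne_top htot.symm
  calc ENNReal.ofReal ((2:ℝ)^(-β) * ((β-1)/β) / 2 * N * (n:ℝ)^(-β))
      ≤ ENNReal.ofReal (1 - (1 - pstar)^K) := ENNReal.ofReal_le_ofReal (by linarith)
    _ = 1 - ENNReal.ofReal ((1 - pstar)^K) := by
        rw [ENNReal.ofReal_sub _ (pow_nonneg (by linarith) _), ENNReal.ofReal_one]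
    _ ≤ 1 - ∑ g ∈ Ec, (jointPMF μ) g := tsub_le_tsub_left hEc_le 1
    _ = ∑ g ∈ E, (jointPMF μ) g := hlast


end
end

section
/- For every β ∈ (1,2) there exists a constant c > 0 (depending only on β) such that the following holds for all integers n ≥ 1, all x ∈ {0,1}^n with u := |x|_0 ≤ n/4, and all integers v with u + 1 ≤ v ≤ n/2 − 1: if y is the offspring of power-law mutation with exponent β applied to x, then Pr[|y|_0 = v] ≥ c·(v − u)^{−β}. -/
open scoped ENNReal Classical

noncomputable section

namespace PLAux

open Finset

/-- unnormalized hypergeometric weight -/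
def cnt (n u m j : ℕ) : ℕ := u.choose j * (n - u).choose (m - j)

lemma vandermonde (n u m : ℕ) (hu : u ≤ n) :
    ∑ j ∈ range (m + 1), cnt n u m j = n.choose m := by
  have h := Nat.add_choose_eq u (n - u) m
  rw [Finset.Nat.sum_antidiagonal_eq_sum_range_succ_mk] at h
  have h2 : u + (n - u) = n := by omega
  rw [h2] at h
  rw [h]
  rfl

lemma mean_eq (n u m : ℕ) (hu1 : 1 ≤ u) (hu : u ≤ n) (hm : 1 ≤ m) :
    ∑ j ∈ range (m + 1), j * cnt n u m j = u * (n - 1).choose (m - 1) := by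
  obtain ⟨m', rfl⟩ : ∃ m', m = m' + 1 := ⟨m - 1, by omega⟩
  simp only [Nat.add_sub_cancel]
  rw [Finset.sum_range_succ']
  simp only [zero_mul, add_zero]
  have key : ∀ j : ℕ, (j + 1) * cnt n u (m'+1) (j + 1) = u * cnt (n-1) (u-1) m' j := by
    intro j
    unfold cnt
    have h1 : u * (u-1).choose j = u.choose (j+1) * (j+1) := by
      have := Nat.add_one_mul_choose_eq (u - 1) j
      have hu' : u - 1 + 1 = u := by omega
      rwa [hu'] at this
    have h2 : m' + 1 - (j+1) = m' - j := by omega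
    have h3 : (n-1) - (u-1) = n - u := by omega
    rw [h2, h3]
    calc (j+1) * (u.choose (j+1) * (n-u).choose (m'-j))
        = (u.choose (j+1) * (j+1)) * (n-u).choose (m'-j) := by ring
      _ = (u * (u-1).choose j) * (n-u).choose (m'-j) := by rw [h1]
      _ = u * ((u-1).choose j * (n-u).choose (m'-j)) := by ring
  calc ∑ j ∈ range (m'+1), (j+1) * cnt n u (m'+1) (j+1)
      = ∑ j ∈ range (m'+1), u * cnt (n-1) (u-1) m' j := by
        exact Finset.sum_congr rfl fun j _ => key j
    _ = u * ∑ j ∈ range (m'+1), cnt (n-1) (u-1) m' j := by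
        rw [← Finset.mul_sum]
    _ = u * (n-1).choose m' := by rw [vandermonde (n-1) (u-1) m' (by omega)]

lemma step (n u m D : ℕ) (hu : u ≤ n) (hD : D ≤ m) :
    (∑ j ∈ range (D + 1), cnt n u (m + 1) j) * (m + 1) + cnt n u m D * (u - D)
      = (∑ j ∈ range (D + 1), cnt n u m j) * (n - m) := by
  have key1 : ∀ j, j ≤ m →
      cnt n u (m+1) j * ((m+1) - j) = cnt n u m j * ((n - u) - (m - j)) := by
    intro j hj
    unfold cnt
    have h : m + 1 - j = (m - j) + 1 := by omega
    rw [h]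
    calc u.choose j * (n-u).choose ((m-j)+1) * ((m-j)+1)
        = u.choose j * ((n-u).choose ((m-j)+1) * ((m-j)+1)) := by ring
      _ = u.choose j * ((n-u).choose (m-j) * ((n-u) - (m-j))) := by
          rw [Nat.choose_succ_right_eq]
      _ = u.choose j * (n-u).choose (m-j) * ((n-u) - (m-j)) := by ring
  have key2 : ∀ j : ℕ, cnt n u (m+1) (j+1) * (j+1) = cnt n u m j * (u - j) := by
    intro j
    unfold cnt
    have h : m + 1 - (j+1) = m - j := by omega
    rw [h]
    calc u.choose (j+1) * (n-u).choose (m-j) * (j+1)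
        = (u.choose (j+1) * (j+1)) * (n-u).choose (m-j) := by ring
      _ = (u.choose j * (u - j)) * (n-u).choose (m-j) := by rw [Nat.choose_succ_right_eq]
      _ = u.choose j * (n-u).choose (m-j) * (u - j) := by ring
  have e1 : ∀ j, j ≤ m → cnt n u (m+1) j * (m+1)
      = cnt n u m j * ((n-u) - (m-j)) + cnt n u (m+1) j * j := by
    intro j hj
    have h2 : cnt n u (m+1) j * (m+1)
        = cnt n u (m+1) j * ((m+1) - j) + cnt n u (m+1) j * j := by
      rw [← Nat.mul_add]
      congr 1
      omega
    rw [h2, key1 j hj]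
  have e2 : (∑ j ∈ range (D+1), cnt n u (m+1) j * j)
      = ∑ j ∈ range D, cnt n u m j * (u - j) := by
    rw [Finset.sum_range_succ']
    simp only [Nat.mul_zero, add_zero]
    exact Finset.sum_congr rfl fun j _ => key2 j
  have merge : ∀ j, j ≤ m → cnt n u m j * ((n-u)-(m-j)) + cnt n u m j * (u-j)
      = cnt n u m j * (n - m) := by
    intro j hj
    rcases Nat.lt_or_ge u j with h | h
    · unfold cnt; rw [Nat.choose_eq_zero_of_lt h]; simp
    rcases Nat.lt_or_ge (n-u) (m-j) with h2 | h2
    · unfold cnt; rw [Nat.choose_eq_zero_of_lt h2]; simp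
    · rw [← Nat.mul_add]
      congr 1
      omega
  rw [Finset.sum_mul,
    Finset.sum_congr rfl (fun j hj => e1 j (by have := Finset.mem_range.mp hj; omega)),
    Finset.sum_add_distrib, e2, Finset.sum_mul]
  rw [add_assoc, ← Finset.sum_range_succ (fun j => cnt n u m j * (u - j)) D,
    ← Finset.sum_add_distrib]
  exact Finset.sum_congr rfl fun j hj => merge j (by have := Finset.mem_range.mp hj; omega)

lemma cdf_mono (n u m D : ℕ) (hu : u ≤ n) (hD : D ≤ m) :
    (∑ j ∈ range (D+1), cnt n u (m+1) j) * n.choose m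
      ≤ (∑ j ∈ range (D+1), cnt n u m j) * n.choose (m+1) := by
  have h := step n u m D hu hD
  have hP : n.choose (m+1) * (m+1) = n.choose m * (n - m) := Nat.choose_succ_right_eq n m
  have hmain : (∑ j ∈ range (D+1), cnt n u (m+1) j) * n.choose m * (m+1)
      ≤ (∑ j ∈ range (D+1), cnt n u m j) * n.choose (m+1) * (m+1) := by
    calc (∑ j ∈ range (D+1), cnt n u (m+1) j) * n.choose m * (m+1)
        = ((∑ j ∈ range (D+1), cnt n u (m+1) j) * (m+1)) * n.choose m := by ring
      _ ≤ ((∑ j ∈ range (D+1), cnt n u (m+1) j) * (m+1) + cnt n u m D * (u - D))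
            * n.choose m := Nat.mul_le_mul_right _ (Nat.le_add_right _ _)
      _ = ((∑ j ∈ range (D+1), cnt n u m j) * (n-m)) * n.choose m := by rw [h]
      _ = (∑ j ∈ range (D+1), cnt n u m j) * (n.choose m * (n-m)) := by ring
      _ = (∑ j ∈ range (D+1), cnt n u m j) * (n.choose (m+1) * (m+1)) := by rw [← hP]
      _ = (∑ j ∈ range (D+1), cnt n u m j) * n.choose (m+1) * (m+1) := by ring
  exact Nat.le_of_mul_le_mul_right hmain (Nat.succ_pos m)

/-- normalized hypergeometric weight, real -/
noncomputable def hq (n u m j : ℕ) : ℝ := (cnt n u m j : ℝ) / (n.choose m : ℝ)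

lemma cdf_mono_real (n u m D : ℕ) (hu : u ≤ n) (hD : D ≤ m) (hm : m + 1 ≤ n) :
    ∑ j ∈ range (D+1), hq n u (m+1) j ≤ ∑ j ∈ range (D+1), hq n u m j := by
  unfold hq
  rw [← Finset.sum_div, ← Finset.sum_div]
  rw [div_le_div_iff₀ (by exact_mod_cast Nat.choose_pos hm)
      (by exact_mod_cast Nat.choose_pos (by omega : m ≤ n))]
  exact_mod_cast cdf_mono n u m D hu hD

lemma diag_ge (n u k : ℕ) (hu : u ≤ n) (hk : 1 ≤ k) :
    ∀ D, k + 2*D ≤ n →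
    ∑ j ∈ range (D+1), hq n u (k+2*D) j
      ≤ ∑ Δ ∈ range (D+1), hq n u (k+2*Δ) Δ := by
  intro D
  induction D with
  | zero => intro _; exact le_refl _
  | succ D ih =>
    intro hM
    have hM' : k + 2*D ≤ n := by omega
    have h1 : k + 2*(D+1) = (k+2*D) + 1 + 1 := by ring
    set m := k + 2*D with hm
    calc ∑ j ∈ range (D+1+1), hq n u (k+2*(D+1)) j
        = (∑ j ∈ range (D+1), hq n u (m+1+1) j) + hq n u (m+1+1) (D+1) := by
          rw [h1, Finset.sum_range_succ]
      _ ≤ (∑ j ∈ range (D+1), hq n u (m+1) j) + hq n u (m+1+1) (D+1) := by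
          exact add_le_add_left
            (cdf_mono_real n u (m+1) D hu (by omega) (by omega)) _
      _ ≤ (∑ j ∈ range (D+1), hq n u m j) + hq n u (m+1+1) (D+1) := by
          exact add_le_add_left
            (cdf_mono_real n u m D hu (by omega) (by omega)) _
      _ ≤ (∑ Δ ∈ range (D+1), hq n u (k+2*Δ) Δ) + hq n u (m+1+1) (D+1) :=
          add_le_add_left (ih hM') _
      _ = ∑ Δ ∈ range (D+1+1), hq n u (k+2*Δ) Δ := by
          conv_rhs => rw [Finset.sum_range_succ]
          rw [show k+2*(D+1) = m+1+1 from by omega]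

/-- head sum is at least a third of the total -/
lemma cdf_lb (n u k : ℕ) (hn : 1 ≤ n) (hu4 : 4*u ≤ n) (hk : 1 ≤ k)
    (hM : k + 2*(min u (2*k)) ≤ n) :
    n.choose (k + 2*(min u (2*k)))
      ≤ 3 * ∑ j ∈ range ((min u (2*k)) + 1), cnt n u (k + 2*(min u (2*k))) j := by
  set D := min u (2*k) with hD
  set M := k + 2*D with hMdef
  have hu : u ≤ n := by omega
  rcases Nat.le_total u (2*k) with hcase | hcase
  · -- D = u : all mass
    have hDu : D = u := by omega
    have hsub : ∑ j ∈ range (D+1), cnt n u M j = ∑ j ∈ range (M+1), cnt n u M j := by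
      apply Finset.sum_subset
      · intro j hj
        simp only [Finset.mem_range] at *
        omega
      · intro j _ hj
        simp only [Finset.mem_range, not_lt] at hj
        have : u < j := by omega
        unfold cnt
        rw [Nat.choose_eq_zero_of_lt this, zero_mul]
    rw [hsub, vandermonde n u M hu]
    omega
  · -- D = 2k, M = 5k : Markov
    have hD2 : D = 2*k := by omega
    have hu1 : 1 ≤ u := by omega
    have hM5 : M = 5*k := by omega
    have hM1 : 1 ≤ M := by omega
    have hsplit : ∑ j ∈ range (M+1), cnt n u M j
        = (∑ j ∈ range (D+1), cnt n u M j) + ∑ j ∈ Ico (D+1) (M+1), cnt n u M j := by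
      rw [Finset.range_eq_Ico, Finset.range_eq_Ico]
      exact (Finset.sum_Ico_consecutive (fun j => cnt n u M j) (by omega : 0 ≤ D+1) (by omega : D+1 ≤ M+1)).symm
    set tail := ∑ j ∈ Ico (D+1) (M+1), cnt n u M j with htail
    set head := ∑ j ∈ range (D+1), cnt n u M j with hhead
    have hC : head + tail = n.choose M := by
      rw [← hsplit, vandermonde n u M hu]
    have t1 : tail * (D+1) ≤ u * (n-1).choose (M-1) := by
      calc tail * (D+1) = ∑ j ∈ Ico (D+1) (M+1), cnt n u M j * (D+1) := by
            rw [Finset.sum_mul]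
        _ ≤ ∑ j ∈ Ico (D+1) (M+1), j * cnt n u M j := by
            apply Finset.sum_le_sum
            intro j hj
            have := Finset.mem_Ico.mp hj
            calc cnt n u M j * (D+1) ≤ cnt n u M j * j :=
                  Nat.mul_le_mul_left _ (by omega)
              _ = j * cnt n u M j := Nat.mul_comm _ _
        _ ≤ ∑ j ∈ range (M+1), j * cnt n u M j := by
            apply Finset.sum_le_sum_of_subset
            intro j hj
            have := Finset.mem_Ico.mp hj
            simp only [Finset.mem_range]
            omega
        _ = u * (n-1).choose (M-1) := mean_eq n u M hu1 hu hM1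
    have t2 : n * ((n-1).choose (M-1)) = n.choose M * M := by
      have := Nat.add_one_mul_choose_eq (n-1) (M-1)
      have h1 : n - 1 + 1 = n := by omega
      have h2 : M - 1 + 1 = M := by omega
      rw [h1, h2] at this
      exact this
    have t3 : 4 * (tail * (D+1)) * n ≤ n * (n.choose M * M) := by
      calc 4 * (tail * (D+1)) * n ≤ 4 * (u * (n-1).choose (M-1)) * n := by
            exact Nat.mul_le_mul_right _ (Nat.mul_le_mul_left _ t1)
        _ = (4*u) * ((n-1).choose (M-1) * n) := by ring
        _ ≤ n * ((n-1).choose (M-1) * n) := Nat.mul_le_mul_right _ hu4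
        _ = n * (n * ((n-1).choose (M-1))) := by ring
        _ = n * (n.choose M * M) := by rw [t2]
    have t4 : 4 * (tail * (D+1)) ≤ n.choose M * M := by
      have h := t3
      have hrw : 4 * (tail * (D+1)) * n = n * (4 * (tail * (D+1))) := by ring
      rw [hrw] at h
      exact Nat.le_of_mul_le_mul_left h (by omega)
    have t5 : 8 * tail * (D + 1) ≤ 5 * n.choose M * (D+1) := by
      calc 8 * tail * (D+1) = 2 * (4 * (tail * (D+1))) := by ring
        _ ≤ 2 * (n.choose M * M) := Nat.mul_le_mul_left _ t4
        _ = n.choose M * (10 * k) := by rw [hM5]; ring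
        _ ≤ n.choose M * (5 * (D+1)) := Nat.mul_le_mul_left _ (by omega)
        _ = 5 * n.choose M * (D+1) := by ring
    have t6 : 8 * tail ≤ 5 * n.choose M := by
      exact Nat.le_of_mul_le_mul_right t5 (by omega)
    omega

/-- the main real-valued chain of inequalities -/
lemma chain (β : ℝ) (hβ : 0 < β) (P S : ℝ) (hP : 0 < P) (hPS : P ≤ S)
    (n u k : ℕ) (hn : 1 ≤ n) (hu4 : 4*u ≤ n) (hk : 1 ≤ k)
    (hM : k + 2*(min u (2*k)) ≤ n) :
    (5:ℝ)^(-β)/(3*S) * (k:ℝ)^(-β)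
      ≤ ∑ Δ ∈ range ((min u (2*k))+1),
          (cnt n u (k+2*Δ) Δ : ℝ) *
            (((k+2*Δ : ℕ) : ℝ)^(-β) / P / (n.choose (k+2*Δ) : ℝ)) := by
  set D := min u (2*k) with hD
  set M := k + 2*D with hMdef
  have hu : u ≤ n := by omega
  have hS : 0 < S := lt_of_lt_of_le hP hPS
  -- head mass at least 1/3
  have h13 : (1:ℝ)/3 ≤ ∑ Δ ∈ range (D+1), hq n u (k+2*Δ) Δ := by
    have hb := cdf_lb n u k hn hu4 hk hM
    have hbR : (n.choose M : ℝ) ≤ 3 * ∑ j ∈ range (D+1), (cnt n u M j : ℝ) := by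
      push_cast
      exact_mod_cast hb
    have hCpos : (0:ℝ) < (n.choose M : ℝ) := by
      exact_mod_cast Nat.choose_pos (by omega : M ≤ n)
    have hhead : (1:ℝ)/3 ≤ ∑ j ∈ range (D+1), hq n u M j := by
      unfold hq
      rw [← Finset.sum_div, le_div_iff₀ hCpos]
      linarith
    exact le_trans hhead (diag_ge n u k hu hk D (by omega))
  -- pointwise bound of the power-law factor
  have hterm : ∀ Δ ∈ range (D+1),
      hq n u (k+2*Δ) Δ * (((5*k : ℕ) : ℝ)^(-β) / P)
        ≤ (cnt n u (k+2*Δ) Δ : ℝ) *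
            (((k+2*Δ : ℕ) : ℝ)^(-β) / P / (n.choose (k+2*Δ) : ℝ)) := by
    intro Δ hΔ
    have hΔD : Δ ≤ D := by have := Finset.mem_range.mp hΔ; omega
    have hpow : ((5*k : ℕ) : ℝ)^(-β) ≤ ((k+2*Δ : ℕ) : ℝ)^(-β) := by
      apply Real.rpow_le_rpow_of_nonpos
      · have : (1:ℕ) ≤ k + 2*Δ := by omega
        exact_mod_cast Nat.lt_of_lt_of_le Nat.zero_lt_one (by exact_mod_cast this)
      · have : k + 2*Δ ≤ 5*k := by omega
        exact_mod_cast this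
      · linarith
    have hqnn : 0 ≤ hq n u (k+2*Δ) Δ := by
      unfold hq
      positivity
    have heq : (cnt n u (k+2*Δ) Δ : ℝ) *
        (((k+2*Δ : ℕ) : ℝ)^(-β) / P / (n.choose (k+2*Δ) : ℝ))
        = hq n u (k+2*Δ) Δ * (((k+2*Δ : ℕ) : ℝ)^(-β) / P) := by
      unfold hq
      ring
    rw [heq]
    apply mul_le_mul_of_nonneg_left _ hqnn
    gcongr
  have hsum : ∑ Δ ∈ range (D+1), hq n u (k+2*Δ) Δ * (((5*k : ℕ) : ℝ)^(-β) / P)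
      ≤ ∑ Δ ∈ range (D+1),
          (cnt n u (k+2*Δ) Δ : ℝ) *
            (((k+2*Δ : ℕ) : ℝ)^(-β) / P / (n.choose (k+2*Δ) : ℝ)) :=
    Finset.sum_le_sum hterm
  refine le_trans ?_ hsum
  rw [← Finset.sum_mul]
  have h5k : ((5*k : ℕ) : ℝ)^(-β) = (5:ℝ)^(-β) * (k:ℝ)^(-β) := by
    push_cast
    exact Real.mul_rpow (by norm_num) (by positivity)
  rw [h5k]
  have hknn : (0:ℝ) ≤ (5:ℝ)^(-β) * (k:ℝ)^(-β) := by positivity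
  calc (5:ℝ)^(-β)/(3*S) * (k:ℝ)^(-β)
      = ((5:ℝ)^(-β) * (k:ℝ)^(-β)) / (3*S) := by ring
    _ ≤ ((5:ℝ)^(-β) * (k:ℝ)^(-β)) / (3*P) := by
        apply div_le_div_of_nonneg_left hknn (by linarith) (by linarith)
    _ = (1/3) * ((5:ℝ)^(-β) * (k:ℝ)^(-β) / P) := by ring
    _ ≤ (∑ Δ ∈ range (D+1), hq n u (k+2*Δ) Δ) * ((5:ℝ)^(-β) * (k:ℝ)^(-β) / P) := by
        apply mul_le_mul_of_nonneg_right h13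
        positivity

end PLAux

namespace PLBits

open Finset

variable {n : ℕ}

/-- Flip the bits of `x` in positions `S`. -/
def flipBS (x : BitString n) (S : Finset (Fin n)) : BitString n :=
  fun i => if i ∈ S then !(x i) else x i

lemma flip_ne_iff (x : BitString n) (S : Finset (Fin n)) (i : Fin n) :
    flipBS x S i ≠ x i ↔ i ∈ S := by
  unfold flipBS
  by_cases h : i ∈ S <;> simp [h]

lemma flip_inj (x : BitString n) : Function.Injective (flipBS x) := by
  intro S S' h
  apply Finset.ext
  intro i
  rw [← flip_ne_iff x S i, ← flip_ne_iff x S' i, h]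

lemma hamming_flip (x : BitString n) (S : Finset (Fin n)) :
    hamming x (flipBS x S) = S.card := by
  unfold hamming
  congr 1
  ext i
  simp only [Finset.mem_filter, Finset.mem_univ, true_and]
  rw [ne_comm]
  exact flip_ne_iff x S i

lemma zeros_flip (x : BitString n) (A B : Finset (Fin n))
    (hA : A ⊆ Finset.univ.filter (fun i => x i = false))
    (hB : B ⊆ (Finset.univ.filter (fun i => x i = false))ᶜ) :
    zeros (flipBS x (A ∪ B))
      = ((Finset.univ.filter (fun i => x i = false)).card - A.card) + B.card := by
  set Z := Finset.univ.filter (fun i => x i = false) with hZ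
  have hmemZ : ∀ i : Fin n, i ∈ Z ↔ x i = false := by
    intro i
    simp [hZ]
  have hdisjZ : Disjoint Z Zᶜ := disjoint_compl_right
  have hfilter : Finset.univ.filter (fun i => flipBS x (A ∪ B) i = false) = (Z \ A) ∪ B := by
    ext i
    simp only [Finset.mem_filter, Finset.mem_univ, true_and, Finset.mem_union,
      Finset.mem_sdiff]
    by_cases hiA : i ∈ A
    · have hiZ : i ∈ Z := hA hiA
      have hxi : x i = false := (hmemZ i).mp hiZ
      have hiB : i ∉ B := by
        intro hiB
        exact (Finset.mem_compl.mp (hB hiB)) hiZ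
      simp [flipBS, hiA, hxi, hiB]
    · by_cases hiB : i ∈ B
      · have hiZc : i ∈ Zᶜ := hB hiB
        have hxi : x i = true := by
          have h1 : ¬ (x i = false) := fun h => (Finset.mem_compl.mp hiZc) ((hmemZ i).mpr h)
          simpa using h1
        simp [flipBS, hiA, hiB, hxi]
      · simp only [flipBS, Finset.mem_union, hiA, hiB, or_self, if_false]
        rw [← hmemZ i]
        tauto
  unfold zeros
  rw [hfilter]
  have hdisj : Disjoint (Z \ A) B :=
    Disjoint.mono (Finset.sdiff_subset) hB hdisjZ
  rw [Finset.card_union_of_disjoint hdisj, Finset.card_sdiff_of_subset hA]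

end PLBits

/-- For a parent `x` with `u := |x|₀ ≤ n/4` zeros and any integer `v` with
`u + 1 ≤ v ≤ n/2 − 1`, the offspring `y` of power-law mutation with exponent `β ∈ (1,2)`
satisfies `Pr[|y|₀ = v] ≥ c·(v − u)^{−β}`, with `c > 0` depending only on `β`. -/
theorem power_law_transition_prob :
    ∀ β : ℝ, 1 < β → β < 2 →
      ∃ c : ℝ, 0 < c ∧
        ∀ n : ℕ, 1 ≤ n →
          ∀ mutOp : BitString n → PMF (BitString n), IsPowerLawMutation n β mutOp →
            ∀ x : BitString n, (zeros x : ℝ) ≤ (n : ℝ) / 4 →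
              ∀ v : ℕ, zeros x + 1 ≤ v → (v : ℝ) ≤ (n : ℝ) / 2 - 1 →
                ENNReal.ofReal (c * ((v : ℝ) - (zeros x : ℝ)) ^ (-β))
                  ≤ (mutOp x).toOuterMeasure {y | zeros y = v} := by
  intro β hβ1 hβ2
  have hβ0 : 0 < β := by linarith
  have hsummable : Summable (fun i : ℕ => ((i : ℝ) + 1) ^ (-β)) := by
    have h1 : Summable (fun i : ℕ => (i : ℝ) ^ (-β)) :=
      Real.summable_nat_rpow.mpr (by linarith)
    have h2 := (summable_nat_add_iff 1).mpr h1
    have heq : (fun i : ℕ => ((i:ℝ)+1)^(-β)) = (fun i : ℕ => (((i+1 : ℕ) : ℝ))^(-β)) := by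
      funext i
      push_cast
      rfl
    rw [heq]
    exact h2
  set Sc := ∑' i : ℕ, ((i:ℝ)+1)^(-β) with hScdef
  have hSc1 : (1:ℝ) ≤ Sc := by
    have := Summable.le_tsum hsummable 0 (fun j _ => Real.rpow_nonneg (by positivity) _)
    simpa using this
  have hScpos : (0:ℝ) < Sc := by linarith
  refine ⟨(5:ℝ)^(-β) / (3 * Sc),
    div_pos (Real.rpow_pos_of_pos (by norm_num) _) (by linarith), ?_⟩
  intro n hn mutOp hmut x hx4 v hv1 hv2
  set u := zeros x with hu
  obtain ⟨k, hvk⟩ : ∃ k, v = u + k := ⟨v - u, by omega⟩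
  have hk1 : 1 ≤ k := by omega
  have h4u : 4*u ≤ n := by
    have : ((4*u : ℕ) : ℝ) ≤ (n:ℝ) := by push_cast; linarith
    exact_mod_cast this
  have h2v : 2*v + 2 ≤ n := by
    have : ((2*v + 2 : ℕ) : ℝ) ≤ (n:ℝ) := by push_cast; linarith
    exact_mod_cast this
  set D := min u (2*k) with hD
  have hMn : k + 2*D ≤ n := by omega
  have hun : u ≤ n := by omega
  have hPpos : 0 < powC β n := by
    unfold powC
    apply Finset.sum_pos
    · intro i hi
      have h1i : 1 ≤ i := (Finset.mem_Icc.mp hi).1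
      have : (0:ℝ) < (i:ℝ) := by exact_mod_cast h1i
      exact Real.rpow_pos_of_pos this _
    · exact ⟨1, Finset.mem_Icc.mpr ⟨le_refl 1, hn⟩⟩
  have hPS : powC β n ≤ Sc := by
    unfold powC
    have hIcc : Finset.Icc 1 n = Finset.Ico 1 (n+1) := (Finset.Ico_add_one_right_eq_Icc 1 n).symm
    rw [hIcc, Finset.sum_Ico_eq_sum_range]
    simp only [Nat.add_sub_cancel]
    have heq : ∀ i ∈ Finset.range n, ((1 + i : ℕ) : ℝ)^(-β) = ((i:ℝ)+1)^(-β) := by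
      intro i _
      push_cast
      rw [add_comm]
    rw [Finset.sum_congr rfl heq]
    exact Summable.sum_le_tsum _ (fun i _ => Real.rpow_nonneg (by positivity) _) hsummable
  set Z : Finset (Fin n) := Finset.univ.filter (fun i => x i = false) with hZdef
  have hZcard : Z.card = u := rfl
  have hZccard : Zᶜ.card = n - u := by
    rw [Finset.card_compl, Fintype.card_fin, hZcard]
  set F : ℕ → Finset (BitString n) := fun Δ =>
    ((Finset.powersetCard Δ Z) ×ˢ (Finset.powersetCard (k+Δ) Zᶜ)).image
      (fun p => PLBits.flipBS x (p.1 ∪ p.2)) with hF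
  have hmemF : ∀ Δ, Δ ≤ D → ∀ y ∈ F Δ, hamming x y = k + 2*Δ ∧ zeros y = v := by
    intro Δ hΔ y hy
    simp only [hF, Finset.mem_image] at hy
    obtain ⟨p, hp, rfl⟩ := hy
    obtain ⟨hp1, hp2⟩ := Finset.mem_product.mp hp
    obtain ⟨hA, hAcard⟩ := Finset.mem_powersetCard.mp hp1
    obtain ⟨hB, hBcard⟩ := Finset.mem_powersetCard.mp hp2
    have hdisj : Disjoint p.1 p.2 := Disjoint.mono hA hB disjoint_compl_right
    have hcard : (p.1 ∪ p.2).card = k + 2*Δ := by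
      rw [Finset.card_union_of_disjoint hdisj, hAcard, hBcard]
      omega
    constructor
    · rw [PLBits.hamming_flip, hcard]
    · rw [PLBits.zeros_flip x p.1 p.2 hA hB, hAcard, hBcard, hZcard]
      omega
  have hval : ∀ Δ, Δ ≤ D → ∀ y ∈ F Δ, (mutOp x) y = ENNReal.ofReal
      (((k+2*Δ : ℕ) : ℝ)^(-β) / powC β n / (n.choose (k+2*Δ) : ℝ)) := by
    intro Δ hΔ y hy
    obtain ⟨hham, _⟩ := hmemF Δ hΔ y hy
    rw [hmut x y, hham, if_neg (by omega)]
  have hinj : ∀ Δ : ℕ,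
      Set.InjOn (fun p : Finset (Fin n) × Finset (Fin n) => PLBits.flipBS x (p.1 ∪ p.2))
        ↑((Finset.powersetCard Δ Z) ×ˢ (Finset.powersetCard (k+Δ) Zᶜ)) := by
    intro Δ p hp q hq hpq
    obtain ⟨hp1, hp2⟩ := Finset.mem_product.mp (Finset.mem_coe.mp hp)
    obtain ⟨hq1, hq2⟩ := Finset.mem_product.mp (Finset.mem_coe.mp hq)
    have hpA : p.1 ⊆ Z := (Finset.mem_powersetCard.mp hp1).1
    have hpB : p.2 ⊆ Zᶜ := (Finset.mem_powersetCard.mp hp2).1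
    have hqA : q.1 ⊆ Z := (Finset.mem_powersetCard.mp hq1).1
    have hqB : q.2 ⊆ Zᶜ := (Finset.mem_powersetCard.mp hq2).1
    have hUnion : p.1 ∪ p.2 = q.1 ∪ q.2 := PLBits.flip_inj x hpq
    have inter1 : ∀ r : Finset (Fin n) × Finset (Fin n), r.1 ⊆ Z → r.2 ⊆ Zᶜ →
        (r.1 ∪ r.2) ∩ Z = r.1 := by
      intro r hrA hrB
      rw [Finset.union_inter_distrib_right, Finset.inter_eq_left.mpr hrA,
        Finset.disjoint_iff_inter_eq_empty.mp (Disjoint.mono_left hrB disjoint_compl_left),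
        Finset.union_empty]
    have inter2 : ∀ r : Finset (Fin n) × Finset (Fin n), r.1 ⊆ Z → r.2 ⊆ Zᶜ →
        (r.1 ∪ r.2) ∩ Zᶜ = r.2 := by
      intro r hrA hrB
      rw [Finset.union_inter_distrib_right, Finset.inter_eq_left.mpr hrB,
        Finset.disjoint_iff_inter_eq_empty.mp (Disjoint.mono_left hrA disjoint_compl_right),
        Finset.empty_union]
    apply Prod.ext
    · rw [← inter1 p hpA hpB, ← inter1 q hqA hqB, hUnion]
    · rw [← inter2 p hpA hpB, ← inter2 q hqA hqB, hUnion]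
  have hcardF : ∀ Δ, Δ ≤ D → (F Δ).card = PLAux.cnt n u (k+2*Δ) Δ := by
    intro Δ hΔ
    rw [hF]
    simp only []
    rw [Finset.card_image_of_injOn (hinj Δ), Finset.card_product,
      Finset.card_powersetCard, Finset.card_powersetCard, hZcard, hZccard]
    unfold PLAux.cnt
    rw [show k + 2*Δ - Δ = k + Δ from by omega]
  have hdisjF : (↑(Finset.range (D+1)) : Set ℕ).PairwiseDisjoint F := by
    intro a ha b hb hab
    have ha' : a ≤ D := by
      have := Finset.mem_range.mp (Finset.mem_coe.mp ha); omega
    have hb' : b ≤ D := by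
      have := Finset.mem_range.mp (Finset.mem_coe.mp hb); omega
    rw [Function.onFun, Finset.disjoint_left]
    intro y hya hyb
    have h1 := (hmemF a ha' y hya).1
    have h2 := (hmemF b hb' y hyb).1
    exact hab (by omega)
  rw [PMF.toOuterMeasure_apply]
  refine le_trans ?_ (ENNReal.sum_le_tsum ((Finset.range (D+1)).biUnion F))
  rw [Finset.sum_biUnion hdisjF]
  have hsumΔ : ∀ Δ ∈ Finset.range (D+1),
      ∑ y ∈ F Δ, Set.indicator {y | zeros y = v} (⇑(mutOp x)) y
      = (PLAux.cnt n u (k+2*Δ) Δ : ℝ≥0∞) * ENNReal.ofReal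
          (((k+2*Δ : ℕ) : ℝ)^(-β) / powC β n / (n.choose (k+2*Δ) : ℝ)) := by
    intro Δ hΔ
    have hΔD : Δ ≤ D := by have := Finset.mem_range.mp hΔ; omega
    have hind : ∀ y ∈ F Δ, Set.indicator {y | zeros y = v} (⇑(mutOp x)) y
        = ENNReal.ofReal (((k+2*Δ : ℕ) : ℝ)^(-β) / powC β n / (n.choose (k+2*Δ) : ℝ)) := by
      intro y hy
      rw [Set.indicator_of_mem (show y ∈ {y | zeros y = v} from (hmemF Δ hΔD y hy).2) (⇑(mutOp x)), hval Δ hΔD y hy]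
    rw [Finset.sum_congr rfl hind, Finset.sum_const, hcardF Δ hΔD, nsmul_eq_mul]
  rw [Finset.sum_congr rfl hsumΔ]
  have hofreal : ∀ Δ ∈ Finset.range (D+1),
      (PLAux.cnt n u (k+2*Δ) Δ : ℝ≥0∞) * ENNReal.ofReal
          (((k+2*Δ : ℕ) : ℝ)^(-β) / powC β n / (n.choose (k+2*Δ) : ℝ))
      = ENNReal.ofReal ((PLAux.cnt n u (k+2*Δ) Δ : ℝ) *
          (((k+2*Δ : ℕ) : ℝ)^(-β) / powC β n / (n.choose (k+2*Δ) : ℝ))) := by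
    intro Δ _
    rw [ENNReal.ofReal_mul (by positivity), ENNReal.ofReal_natCast]
  rw [Finset.sum_congr rfl hofreal]
  have hnn : ∀ Δ ∈ Finset.range (D+1), 0 ≤ (PLAux.cnt n u (k+2*Δ) Δ : ℝ) *
      (((k+2*Δ : ℕ) : ℝ)^(-β) / powC β n / (n.choose (k+2*Δ) : ℝ)) := by
    intro Δ _
    apply mul_nonneg (by positivity)
    apply div_nonneg _ (by positivity)
    exact div_nonneg (Real.rpow_nonneg (by positivity) _) hPpos.le
  rw [← ENNReal.ofReal_sum_of_nonneg hnn]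
  apply ENNReal.ofReal_le_ofReal
  have hvu : (v:ℝ) - (u:ℝ) = (k:ℝ) := by
    rw [hvk]
    push_cast
    ring
  rw [hvu]
  exact PLAux.chain β hβ0 (powC β n) Sc hPpos hPS n u k hn h4u hk1 hMn

end
end

section
/- Let n ≥ 1 and let (X_t)_{t∈ℕ} be a stochastic process adapted to a filtration (F_t)_{t∈ℕ} taking values in {0, 1, …, n}, and let T = inf{t ∈ ℕ : X_t = 0}. Suppose there is δ > 0 such that for every t ∈ ℕ, almost surely on the event {t < T}, E[X_t − X_{t+1} | F_t] ≥ δ·X_t. Then E[T] ≤ (1 + ln n)/δ. -/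
open MeasureTheory
open scoped ENNReal

noncomputable section

def gfun : ℕ → ℝ := fun k => if k = 0 then 0 else 1 + Real.log k

lemma gfun_nonneg (k : ℕ) : 0 ≤ gfun k := by
  unfold gfun
  split
  · exact le_refl _
  · have : 0 ≤ Real.log k := Real.log_nonneg (by exact_mod_cast Nat.one_le_iff_ne_zero.mpr ‹k ≠ 0›)
    linarith

lemma gfun_le {k n : ℕ} (hn : 1 ≤ n) (hk : k ≤ n) : gfun k ≤ 1 + Real.log n := by
  have hlogn : 0 ≤ Real.log n := Real.log_nonneg (by exact_mod_cast hn)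
  unfold gfun
  split
  · linarith
  · have h1 : (1:ℝ) ≤ k := by exact_mod_cast Nat.one_le_iff_ne_zero.mpr ‹k ≠ 0›
    have : Real.log k ≤ Real.log n := Real.log_le_log (by linarith) (by exact_mod_cast hk)
    linarith

lemma gfun_key (a b : ℕ) : (a:ℝ) - b ≤ a * (gfun a - gfun b) := by
  rcases Nat.eq_zero_or_pos a with ha | ha
  · subst ha; simp
  · have ha1 : (1:ℝ) ≤ a := by exact_mod_cast ha
    have hane : a ≠ 0 := Nat.pos_iff_ne_zero.mp ha
    rcases Nat.eq_zero_or_pos b with hb | hb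
    · subst hb
      have h0 : gfun 0 = 0 := by simp [gfun]
      rw [h0, sub_zero]
      simp only [gfun, if_neg hane, Nat.cast_zero, sub_zero]
      have : 0 ≤ Real.log a := Real.log_nonneg ha1
      nlinarith
    · have hb1 : (1:ℝ) ≤ b := by exact_mod_cast hb
      have hbne : b ≠ 0 := Nat.pos_iff_ne_zero.mp hb
      simp only [gfun, if_neg hane, if_neg hbne]
      have hlog : Real.log ((b:ℝ)/a) ≤ (b:ℝ)/a - 1 :=
        Real.log_le_sub_one_of_pos (by positivity)
      rw [Real.log_div (by linarith) (by linarith)] at hlog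
      have h3 : (a:ℝ) * (1 - (b:ℝ)/a) ≤ a * (1 + Real.log a - (1 + Real.log b)) :=
        mul_le_mul_of_nonneg_left (by linarith) (by linarith)
      have h4 : (a:ℝ) * (1 - (b:ℝ)/a) = a - b := by field_simp
      linarith


/-- multiplicative drift, expectation version: Let `(X_t)` be a process
adapted to a filtration `ℱ`, with values in `{0, …, n}`, and let
`T = inf{t : X_t = 0}` (as an element of `ℝ≥0∞`, with `T = ∞` if `X` never hits `0`).
If there is `δ > 0` such that for every `t`, almost surely on `{t < T}`,
`E[X_t − X_{t+1} | ℱ_t] ≥ δ·X_t`, then `E[T] ≤ (1 + ln n)/δ`. -/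
theorem multiplicative_drift_expectation
    {Ω : Type*} {m0 : MeasurableSpace Ω} (μ : Measure Ω) [IsProbabilityMeasure μ]
    (ℱ : Filtration ℕ m0) (n : ℕ) (hn : 1 ≤ n)
    (X : ℕ → Ω → ℕ)
    (hadapted : ∀ t, Measurable[ℱ t] (X t))
    (hbounded : ∀ t ω, X t ω ≤ n)
    (T : Ω → ℝ≥0∞)
    (hT : T = fun ω => sInf {s : ℝ≥0∞ | ∃ t : ℕ, X t ω = 0 ∧ s = (t : ℝ≥0∞)})
    (δ : ℝ) (hδ : 0 < δ)
    (hdrift : ∀ t : ℕ, ∀ᵐ ω ∂μ, (t : ℝ≥0∞) < T ω →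
      δ * (X t ω : ℝ)
        ≤ (μ[fun ω' => (X t ω' : ℝ) - (X (t + 1) ω' : ℝ) | ℱ t]) ω) :
    ∫⁻ ω, T ω ∂μ ≤ ENNReal.ofReal ((1 + Real.log n) / δ) := by
  classical
  -- the event {T > t}
  set E : ℕ → Set Ω := fun t => {ω | (t : ℝ≥0∞) < T ω} with hE
  have hE_iff : ∀ (t : ℕ) (ω : Ω), ω ∈ E t ↔ ∀ s ≤ t, X s ω ≠ 0 := by
    intro t ω
    simp only [hE, hT, Set.mem_setOf_eq]
    constructor
    · intro h s hs hzero
      have hmem : ((s : ℕ) : ℝ≥0∞) ∈ {s : ℝ≥0∞ | ∃ u : ℕ, X u ω = 0 ∧ s = (u : ℝ≥0∞)} :=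
        ⟨s, hzero, rfl⟩
      have h2 : (t : ℝ≥0∞) < (s : ℝ≥0∞) := lt_of_lt_of_le h (sInf_le hmem)
      exact absurd (Nat.cast_lt.mp h2) (not_lt.mpr hs)
    · intro h
      have h1 : ((t + 1 : ℕ) : ℝ≥0∞) ≤ sInf {s : ℝ≥0∞ | ∃ u : ℕ, X u ω = 0 ∧ s = (u : ℝ≥0∞)} := by
        apply le_sInf
        rintro s ⟨u, hu0, rfl⟩
        have : t < u := by
          by_contra hc
          exact h u (not_lt.mp hc) hu0
        exact_mod_cast this
      calc (t : ℝ≥0∞) < ((t + 1 : ℕ) : ℝ≥0∞) := by exact_mod_cast Nat.lt_succ_self t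
        _ ≤ _ := h1
  have hE_measF : ∀ t, MeasurableSet[ℱ t] (E t) := by
    intro t
    have : E t = ⋂ (s : ℕ) (_ : s ≤ t), (X s) ⁻¹' ({0}ᶜ) := by
      ext ω; simp [hE_iff t ω]
    rw [this]
    exact MeasurableSet.iInter fun s => MeasurableSet.iInter fun hs =>
      (Measurable.mono (hadapted s) (ℱ.mono hs) le_rfl) (measurableSet_singleton 0).compl
  have hE_meas : ∀ t, MeasurableSet (E t) := fun t => ℱ.le t _ (hE_measF t)
  have hE_mono : ∀ t, E (t + 1) ⊆ E t := by
    intro t ω hω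
    rw [hE_iff] at hω ⊢
    exact fun s hs => hω s (hs.trans (Nat.le_succ t))
  -- T as a sum of indicators
  have hT_sum : ∀ ω, T ω = ∑' t : ℕ, (E t).indicator (fun _ => (1 : ℝ≥0∞)) ω := by
    intro ω
    by_cases hzero : ∃ u : ℕ, X u ω = 0
    · set m := Nat.find hzero with hm
      have hTm : T ω = (m : ℝ≥0∞) := by
        rw [hT]
        apply le_antisymm
        · exact sInf_le ⟨m, Nat.find_spec hzero, rfl⟩
        · apply le_sInf
          rintro s ⟨u, hu0, rfl⟩
          exact_mod_cast Nat.find_min' hzero hu0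
      have hind : ∀ t : ℕ, (E t).indicator (fun _ => (1 : ℝ≥0∞)) ω
          = if t < m then 1 else 0 := by
        intro t
        rw [Set.indicator_apply]
        congr 1
        simp only [eq_iff_iff]
        rw [hE_iff]
        constructor
        · intro h
          by_contra hc
          exact h m (not_lt.mp hc) (Nat.find_spec hzero)
        · intro h s hs hzs
          exact absurd (Nat.find_min' hzero hzs) (not_le.mpr (lt_of_le_of_lt hs h))
      rw [hTm]
      calc (m : ℝ≥0∞) = ∑ t ∈ Finset.range m, (1 : ℝ≥0∞) := by simp
        _ = ∑' t : ℕ, (if t < m then (1:ℝ≥0∞) else 0) := by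
            rw [tsum_eq_sum (s := Finset.range m)]
            · exact Finset.sum_congr rfl fun t ht => (if_pos (Finset.mem_range.mp ht)).symm
            · intro t ht
              exact if_neg (fun hc => ht (Finset.mem_range.mpr hc))
        _ = _ := by
            exact tsum_congr fun t => (hind t).symm
    · have hset : {s : ℝ≥0∞ | ∃ u : ℕ, X u ω = 0 ∧ s = (u : ℝ≥0∞)} = ∅ := by
        ext s
        simp only [Set.mem_setOf_eq, Set.mem_empty_iff_false, iff_false]
        rintro ⟨u, hu0, rfl⟩
        exact hzero ⟨u, hu0⟩
      have hTtop : T ω = ⊤ := by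
        rw [hT]
        show sInf {s : ℝ≥0∞ | ∃ u : ℕ, X u ω = 0 ∧ s = (u : ℝ≥0∞)} = ⊤
        rw [hset, sInf_empty]
      have hind : ∀ t : ℕ, (E t).indicator (fun _ => (1 : ℝ≥0∞)) ω = 1 := by
        intro t
        rw [Set.indicator_of_mem]
        rw [hE_iff]
        exact fun s _ hs => hzero ⟨s, hs⟩
      rw [hTtop]
      rw [tsum_congr hind]
      exact (ENNReal.tsum_const_eq_top_of_ne_zero one_ne_zero).symm
  have hlin : ∫⁻ ω, T ω ∂μ = ∑' t : ℕ, μ (E t) := by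
    calc ∫⁻ ω, T ω ∂μ = ∫⁻ ω, ∑' t : ℕ, (E t).indicator (fun _ => (1:ℝ≥0∞)) ω ∂μ :=
          lintegral_congr hT_sum
      _ = ∑' t : ℕ, ∫⁻ ω, (E t).indicator (fun _ => (1:ℝ≥0∞)) ω ∂μ :=
          lintegral_tsum fun t => (measurable_one.indicator (hE_meas t)).aemeasurable
      _ = ∑' t : ℕ, μ (E t) := by
          congr 1; funext t; exact lintegral_indicator_one (hE_meas t)
  -- the drift step
  have hXm : ∀ s : ℕ, Measurable fun ω => (X s ω : ℝ) :=
    fun s => measurable_from_top.comp ((hadapted s).mono (ℱ.le s) le_rfl)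
  have hgm : ∀ s : ℕ, Measurable fun ω => gfun (X s ω) :=
    fun s => Measurable.comp (g := gfun) measurable_from_top
      ((hadapted s).mono (ℱ.le s) le_rfl)
  have hlogn : 0 ≤ Real.log n := Real.log_nonneg (by exact_mod_cast hn)
  have hbd : ∀ (s : ℕ) ω, |gfun (X s ω)| ≤ 1 + Real.log n := fun s ω => by
    rw [abs_of_nonneg (gfun_nonneg _)]
    exact gfun_le hn (hbounded s ω)
  have hbdX : ∀ (s : ℕ) ω, |(X s ω : ℝ)| ≤ (n : ℝ) := fun s ω => by
    rw [abs_of_nonneg (Nat.cast_nonneg _)]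
    exact_mod_cast hbounded s ω
  have hint : ∀ (f : Ω → ℝ) (C : ℝ), Measurable f → (∀ ω, |f ω| ≤ C) → Integrable f μ :=
    fun f C hf hb => (integrable_const C).mono' hf.aestronglyMeasurable
      (Filter.Eventually.of_forall fun ω => by simpa using hb ω)
  have hg_int : ∀ s : ℕ, Integrable (fun ω => gfun (X s ω)) μ :=
    fun s => hint _ (1 + Real.log n) (hgm s) (hbd s)
  have hstep : ∀ t : ℕ, δ * (μ (E t)).toReal ≤
      (∫ ω in E t, gfun (X t ω) ∂μ) - ∫ ω in E (t+1), gfun (X (t+1) ω) ∂μ := by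
    intro t
    set D : Ω → ℝ := fun ω => (X t ω : ℝ) - (X (t+1) ω : ℝ) with hD
    set G : Ω → ℝ := fun ω => gfun (X t ω) - gfun (X (t+1) ω) with hG
    have hD_int : Integrable D μ := hint D ((n : ℝ) + n) ((hXm t).sub (hXm (t+1)))
      (fun ω => (abs_sub _ _).trans (add_le_add (hbdX t ω) (hbdX (t+1) ω)))
    have hG_int : Integrable G μ := hint G (2 * (1 + Real.log n)) ((hgm t).sub (hgm (t+1)))
      (fun ω => (abs_sub _ _).trans (by linarith [hbd t ω, hbd (t+1) ω]))
    have hXG_int : Integrable ((fun ω => (X t ω : ℝ)) * G) μ :=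
      hint _ ((n : ℝ) * (2 * (1 + Real.log n))) ((hXm t).mul ((hgm t).sub (hgm (t+1))))
      (fun ω => by
        rw [Pi.mul_apply, abs_mul]
        exact mul_le_mul (hbdX t ω)
          ((abs_sub _ _).trans (by linarith [hbd t ω, hbd (t+1) ω]))
          (abs_nonneg _) (Nat.cast_nonneg n))
    have hpoint : ∀ ω, D ω ≤ ((fun ω => (X t ω : ℝ)) * G) ω := fun ω =>
      gfun_key (X t ω) (X (t+1) ω)
    have hmono := condExp_mono (m := ℱ t) hD_int hXG_int
      (Filter.Eventually.of_forall hpoint)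
    have hsm : StronglyMeasurable[ℱ t] fun ω => (X t ω : ℝ) :=
      (measurable_from_top.comp (hadapted t)).stronglyMeasurable
    have hpull : μ[(fun ω => (X t ω : ℝ)) * G|ℱ t] =ᵐ[μ] fun ω => (X t ω : ℝ) * (μ[G|ℱ t]) ω :=
      condExp_mul_of_stronglyMeasurable_left hsm hXG_int hG_int
    have hae : ∀ᵐ ω ∂μ, ω ∈ E t → δ ≤ (μ[G|ℱ t]) ω := by
      filter_upwards [hdrift t, hmono, hpull] with ω h1 h2 h3
      intro hω
      have hX1 : 1 ≤ (X t ω : ℝ) := by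
        have hne : X t ω ≠ 0 := (hE_iff t ω).mp hω t le_rfl
        exact_mod_cast Nat.one_le_iff_ne_zero.mpr hne
      have h4 : δ * (X t ω : ℝ) ≤ (X t ω : ℝ) * (μ[G|ℱ t]) ω := by
        calc δ * (X t ω : ℝ) ≤ (μ[D|ℱ t]) ω := h1 hω
          _ ≤ (μ[(fun ω => (X t ω : ℝ)) * G|ℱ t]) ω := h2
          _ = (X t ω : ℝ) * (μ[G|ℱ t]) ω := h3
      have hxpos : (0:ℝ) < (X t ω : ℝ) := by linarith
      exact le_of_mul_le_mul_right (by linarith [h4]) hxpos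
    have h5 : δ * (μ (E t)).toReal ≤ ∫ ω in E t, (μ[G|ℱ t]) ω ∂μ := by
      have hc : ∫ _ω in E t, δ ∂μ = δ * (μ (E t)).toReal := by
        rw [setIntegral_const, smul_eq_mul, measureReal_def]; ring
      rw [← hc]
      exact setIntegral_mono_ae_restrict
        (integrableOn_const (measure_ne_top μ _))
        integrable_condExp.integrableOn
        ((ae_restrict_iff' (hE_meas t)).mpr hae)
    have h6 : ∫ ω in E t, (μ[G|ℱ t]) ω ∂μ = ∫ ω in E t, G ω ∂μ :=
      setIntegral_condExp (ℱ.le t) hG_int (hE_measF t)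
    have h7 : ∫ ω in E t, G ω ∂μ
        = (∫ ω in E t, gfun (X t ω) ∂μ) - ∫ ω in E t, gfun (X (t+1) ω) ∂μ :=
      integral_sub (hg_int t).integrableOn (hg_int (t+1)).integrableOn
    have h8 : ∫ ω in E (t+1), gfun (X (t+1) ω) ∂μ ≤ ∫ ω in E t, gfun (X (t+1) ω) ∂μ :=
      setIntegral_mono_set (hg_int (t+1)).integrableOn
        (Filter.Eventually.of_forall fun ω => gfun_nonneg _)
        (HasSubset.Subset.eventuallyLE (hE_mono t))
    linarith
  -- partial sums
  have hh_nonneg : ∀ t : ℕ, 0 ≤ ∫ ω in E t, gfun (X t ω) ∂μ := fun t =>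
    setIntegral_nonneg (hE_meas t) (fun ω _ => gfun_nonneg _)
  have hh0 : ∫ ω in E 0, gfun (X 0 ω) ∂μ ≤ 1 + Real.log n := by
    calc ∫ ω in E 0, gfun (X 0 ω) ∂μ ≤ ∫ _ω in E 0, (1 + Real.log n) ∂μ :=
        setIntegral_mono_on (hg_int 0).integrableOn
          (integrableOn_const (measure_ne_top μ _))
          (hE_meas 0) (fun ω _ => gfun_le hn (hbounded 0 ω))
      _ = (μ (E 0)).toReal * (1 + Real.log n) := by rw [setIntegral_const, smul_eq_mul, measureReal_def]
      _ ≤ 1 * (1 + Real.log n) := by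
          apply mul_le_mul_of_nonneg_right _ (by linarith)
          exact ENNReal.toReal_le_of_le_ofReal one_pos.le (by simpa using prob_le_one)
      _ = 1 + Real.log n := one_mul _
  have hpartial : ∀ N : ℕ, ∑ t ∈ Finset.range N, (μ (E t)).toReal ≤ (1 + Real.log n) / δ := by
    intro N
    have hsum : ∑ t ∈ Finset.range N, δ * (μ (E t)).toReal ≤
        ∑ t ∈ Finset.range N,
          ((∫ ω in E t, gfun (X t ω) ∂μ) - ∫ ω in E (t+1), gfun (X (t+1) ω) ∂μ) :=
      Finset.sum_le_sum fun t _ => hstep t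
    rw [Finset.sum_range_sub' (fun t => ∫ ω in E t, gfun (X t ω) ∂μ)] at hsum
    rw [← Finset.mul_sum] at hsum
    rw [le_div_iff₀ hδ]
    have := hh_nonneg N
    have := hh0
    nlinarith
  rw [hlin]
  apply ENNReal.tsum_le_of_sum_range_le
  intro N
  have h1 : ∑ t ∈ Finset.range N, μ (E t)
      = ENNReal.ofReal (∑ t ∈ Finset.range N, (μ (E t)).toReal) := by
    rw [ENNReal.ofReal_sum_of_nonneg (fun t _ => ENNReal.toReal_nonneg)]
    exact Finset.sum_congr rfl fun t _ => (ENNReal.ofReal_toReal (measure_ne_top μ _)).symm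
  rw [h1]
  exact ENNReal.ofReal_le_ofReal (hpartial N)
end
end
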